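/- arXiv:1011.3168 — 9 statements merged into one kernel-verified Lean document; each statement's English description precedes it below -/
import Mathlib

section
/- For any finite set V of real-valued trees of depth T (each tree v is a sequence of maps v_t : {±1}^{t-1} → ℝ), if ε_1,...,ε_T are i.i.d. Rademacher random variables then E[max over v in V of Σ_{t=1}^T ε_t v_t(ε)] ≤ sqrt(2 log|V| · max over v in V and ε in {±1}^T of Σ_{t=1}^T v_t(ε)^2). -/
set_option maxHeartbeats 1000000

private lemma core_ineq (A x : ℝ) :
    Real.exp (A + x - x^2/2) + Real.exp (A - x - x^2/2) ≤ 2 * Real.exp A := by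
  have h := Real.cosh_le_exp_half_sq x
  rw [Real.cosh_eq] at h
  have h1 : Real.exp (A + x - x^2/2) + Real.exp (A - x - x^2/2)
      = Real.exp (A - x^2/2) * (Real.exp x + Real.exp (-x)) := by
    rw [mul_add, ← Real.exp_add, ← Real.exp_add]; ring_nf
  rw [h1]
  have h2 : Real.exp x + Real.exp (-x) ≤ 2 * Real.exp (x^2/2) := by linarith
  calc Real.exp (A - x^2/2) * (Real.exp x + Real.exp (-x))
      ≤ Real.exp (A - x^2/2) * (2 * Real.exp (x^2/2)) :=
        mul_le_mul_of_nonneg_left h2 (Real.exp_pos _).le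
    _ = 2 * (Real.exp (A - x^2/2) * Real.exp (x^2/2)) := by ring
    _ = 2 * Real.exp A := by rw [← Real.exp_add]; ring_nf

private lemma mgf_bound (T : ℕ) (v : Fin T → (Fin T → Bool) → ℝ)
    (hv : ∀ t : Fin T, ∀ ε ε' : Fin T → Bool,
      (∀ s : Fin T, s < t → ε s = ε' s) → v t ε = v t ε')
    (l B : ℝ) (hB : ∀ ε, ∑ t, (v t ε)^2 ≤ B) :
    ∑ ε : Fin T → Bool, Real.exp (l * ∑ t, (if ε t then (1:ℝ) else -1) * v t ε)
      ≤ 2^T * Real.exp (l^2 * B / 2) := by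
  classical
  set sg : (Fin T → Bool) → Fin T → ℝ := fun ε t => if ε t then (1:ℝ) else -1 with hsg
  set f : ℕ → (Fin T → Bool) → ℝ := fun k ε =>
    Real.exp (l * (∑ t ∈ Finset.univ.filter fun t : Fin T => (t:ℕ) < k, sg ε t * v t ε)
      + l^2/2 * (B - ∑ t ∈ Finset.univ.filter fun t : Fin T => (t:ℕ) < k, (v t ε)^2)) with hf
  have step : ∀ k : ℕ, (∑ ε : Fin T → Bool, f (k+1) ε) ≤ ∑ ε : Fin T → Bool, f k ε := by
    intro k
    by_cases hk : k < T
    · set i : Fin T := ⟨k, hk⟩ with hi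
      have hinv : Function.Involutive (fun ε : Fin T → Bool => Function.update ε i (!ε i)) := by
        intro ε; funext s
        rcases eq_or_ne s i with rfl | h
        · simp
        · simp [Function.update_apply, h]
      set e := hinv.toPerm with he
      have hsplit : (Finset.univ.filter fun t : Fin T => (t:ℕ) < k+1)
          = insert i (Finset.univ.filter fun t : Fin T => (t:ℕ) < k) := by
        ext t
        simp only [Finset.mem_filter, Finset.mem_insert, Finset.mem_univ, true_and]
        constructor
        · intro ht
          rcases Nat.lt_succ_iff_lt_or_eq.1 ht with h' | h'
          · exact Or.inr h'
          · exact Or.inl (Fin.ext h')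
        · rintro (rfl | h')
          · exact Nat.lt_succ_self k
          · exact Nat.lt_succ_of_lt h'
      have hinotin : i ∉ (Finset.univ.filter fun t : Fin T => (t:ℕ) < k) := by
        simp [hi]
      have key : ∀ ε : Fin T → Bool, f (k+1) ε + f (k+1) (e ε) ≤ f k ε + f k (e ε) := by
        intro ε
        have hε'def : e ε = Function.update ε i (!ε i) := rfl
        have hvag : ∀ t : Fin T, (t:ℕ) ≤ k → v t (e ε) = v t ε := by
          intro t ht
          refine hv t (e ε) ε fun s hs => ?_
          have hsi : s ≠ i := by
            intro hsi
            have h1 : (s:ℕ) < (t:ℕ) := hs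
            rw [hsi] at h1
            simp only [hi] at h1
            omega
          rw [hε'def, Function.update_apply, if_neg hsi]
        have hsag : ∀ t : Fin T, (t:ℕ) < k → sg (e ε) t = sg ε t := by
          intro t ht
          have hti : t ≠ i := by
            intro hti; rw [hti] at ht; simp only [hi] at ht; omega
          simp only [hsg, hε'def, Function.update_apply, if_neg hti]
        have hQ : (∑ t ∈ Finset.univ.filter fun t : Fin T => (t:ℕ) < k, sg (e ε) t * v t (e ε))
            = ∑ t ∈ Finset.univ.filter fun t : Fin T => (t:ℕ) < k, sg ε t * v t ε := by
          refine Finset.sum_congr rfl fun t ht => ?_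
          have ht' : (t:ℕ) < k := (Finset.mem_filter.1 ht).2
          rw [hsag t ht', hvag t ht'.le]
        have hP : (∑ t ∈ Finset.univ.filter fun t : Fin T => (t:ℕ) < k, (v t (e ε))^2)
            = ∑ t ∈ Finset.univ.filter fun t : Fin T => (t:ℕ) < k, (v t ε)^2 := by
          refine Finset.sum_congr rfl fun t ht => ?_
          have ht' : (t:ℕ) < k := (Finset.mem_filter.1 ht).2
          rw [hvag t ht'.le]
        have hvi : v i (e ε) = v i ε := hvag i le_rfl
        have hsi : sg (e ε) i = - sg ε i := by
          simp only [hsg, hε'def, Function.update_self]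
          cases hb : ε i <;> simp
        set Q := ∑ t ∈ Finset.univ.filter fun t : Fin T => (t:ℕ) < k, sg ε t * v t ε with hQdef
        set P := ∑ t ∈ Finset.univ.filter fun t : Fin T => (t:ℕ) < k, (v t ε)^2 with hPdef
        set c := sg ε i * v i ε with hc
        have hc2 : c^2 = (v i ε)^2 := by
          simp only [hc, hsg, mul_pow]
          cases hb : ε i <;> norm_num
        have hA1 : f (k+1) ε = Real.exp ((l * Q + l^2/2 * (B - P)) + l*c - (l*c)^2/2) := by
          simp only [hf, hsplit, Finset.sum_insert hinotin]
          congr 1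
          rw [← hQdef, ← hPdef, ← hc, ← hc2]
          ring
        have hA2 : f (k+1) (e ε) = Real.exp ((l * Q + l^2/2 * (B - P)) - l*c - (l*c)^2/2) := by
          simp only [hf, hsplit, Finset.sum_insert hinotin, hQ, hP, hvi, hsi]
          congr 1
          have hnc : -sg ε i * v i ε = -c := by rw [hc]; ring
          rw [← hc2, hnc]
          ring
        have hB1 : f k ε = Real.exp (l * Q + l^2/2 * (B - P)) := rfl
        have hB2 : f k (e ε) = Real.exp (l * Q + l^2/2 * (B - P)) := by
          simp only [hf, hQ, hP]
        rw [hA1, hA2, hB1, hB2]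
        have := core_ineq (l * Q + l^2/2 * (B - P)) (l*c)
        linarith
      have hsum2 : (∑ ε : Fin T → Bool, f (k+1) ε) + (∑ ε : Fin T → Bool, f (k+1) ε)
          = ∑ ε : Fin T → Bool, (f (k+1) ε + f (k+1) (e ε)) := by
        rw [Finset.sum_add_distrib]
        congr 1
        exact (Equiv.sum_comp e (f (k+1))).symm
      have hsum2' : (∑ ε : Fin T → Bool, f k ε) + (∑ ε : Fin T → Bool, f k ε)
          = ∑ ε : Fin T → Bool, (f k ε + f k (e ε)) := by
        rw [Finset.sum_add_distrib]
        congr 1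
        exact (Equiv.sum_comp e (f k)).symm
      have : (∑ ε : Fin T → Bool, f (k+1) ε) + (∑ ε : Fin T → Bool, f (k+1) ε)
          ≤ (∑ ε : Fin T → Bool, f k ε) + (∑ ε : Fin T → Bool, f k ε) := by
        rw [hsum2, hsum2']
        exact Finset.sum_le_sum fun ε _ => key ε
      linarith
    · have hfe : (Finset.univ.filter fun t : Fin T => (t:ℕ) < k+1)
          = (Finset.univ.filter fun t : Fin T => (t:ℕ) < k) := by
        ext t
        simp only [Finset.mem_filter, Finset.mem_univ, true_and]
        have := t.isLt
        omega
      simp only [hf, hfe]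
      exact le_refl _
  have mono : ∀ k : ℕ, (∑ ε : Fin T → Bool, f k ε) ≤ ∑ ε : Fin T → Bool, f 0 ε := by
    intro k
    induction k with
    | zero => exact le_refl _
    | succ n ih => exact (step n).trans ih
  have hFT : (∑ ε : Fin T → Bool, Real.exp (l * ∑ t, (if ε t then (1:ℝ) else -1) * v t ε))
      ≤ ∑ ε : Fin T → Bool, f T ε := by
    refine Finset.sum_le_sum fun ε _ => ?_
    have hfull : (Finset.univ.filter fun t : Fin T => (t:ℕ) < T) = Finset.univ := by
      refine Finset.filter_true_of_mem fun t _ => t.isLt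
    simp only [hf, hfull]
    apply Real.exp_le_exp.2
    have h1 : 0 ≤ l^2/2 * (B - ∑ t, (v t ε)^2) := by
      apply mul_nonneg (by positivity)
      linarith [hB ε]
    have : l * ∑ t, sg ε t * v t ε = l * ∑ t, (if ε t then (1:ℝ) else -1) * v t ε := rfl
    linarith [this.ge]
  have hF0 : (∑ ε : Fin T → Bool, f 0 ε) = 2^T * Real.exp (l^2 * B / 2) := by
    have hempty : (Finset.univ.filter fun t : Fin T => (t:ℕ) < 0) = ∅ := by
      ext t; simp
    simp only [hf, hempty, Finset.sum_empty, mul_zero, zero_add, sub_zero,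
      Finset.sum_const, Finset.card_univ]
    have hcard : Fintype.card (Fin T → Bool) = 2^T := by simp
    have harg : l^2/2 * B = l^2 * B / 2 := by ring
    rw [hcard, harg, nsmul_eq_mul]
    push_cast
    ring
  calc (∑ ε : Fin T → Bool, Real.exp (l * ∑ t, (if ε t then (1:ℝ) else -1) * v t ε))
      ≤ ∑ ε : Fin T → Bool, f T ε := hFT
    _ ≤ ∑ ε : Fin T → Bool, f 0 ε := mono T
    _ = 2^T * Real.exp (l^2 * B / 2) := hF0

/-- Maximal inequality for a finite set of real-valued trees of depth `T`
(Lemma 4 of Rakhlin–Sridharan–Tewari): the expectation (uniform average over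
sign sequences `ε ∈ {±1}^T`) of the maximum over `v ∈ V` of `∑ t, ε t * v t ε`
is at most `√(2 log |V| · max_{v,ε} ∑ t, v t ε ^ 2)`. -/
theorem stmt_0 (T : ℕ) (V : Finset (Fin T → (Fin T → Bool) → ℝ)) (hV : V.Nonempty)
    (htree : ∀ v ∈ V, ∀ t : Fin T, ∀ ε ε' : Fin T → Bool,
      (∀ s : Fin T, s < t → ε s = ε' s) → v t ε = v t ε') :
    (∑ ε : Fin T → Bool, V.sup' hV fun v => ∑ t, (if ε t then (1:ℝ) else -1) * v t ε) / 2 ^ T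
      ≤ Real.sqrt (2 * Real.log V.card *
          V.sup' hV fun v => (Finset.univ : Finset (Fin T → Bool)).sup'
            Finset.univ_nonempty fun ε => ∑ t, (v t ε) ^ 2) := by
  classical
  set B : ℝ := V.sup' hV fun v => (Finset.univ : Finset (Fin T → Bool)).sup'
      Finset.univ_nonempty fun ε => ∑ t, (v t ε) ^ 2 with hBdef
  set L : ℝ := Real.log V.card with hLdef
  set S : (Fin T → (Fin T → Bool) → ℝ) → (Fin T → Bool) → ℝ :=
    fun v ε => ∑ t, (if ε t then (1:ℝ) else -1) * v t ε with hSdef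
  set LHS : ℝ := (∑ ε : Fin T → Bool, V.sup' hV fun v => S v ε) / 2 ^ T with hLHSdef
  have hB : ∀ v ∈ V, ∀ ε : Fin T → Bool, (∑ t, (v t ε) ^ 2) ≤ B := by
    intro v hv ε
    calc (∑ t, (v t ε) ^ 2)
        ≤ (Finset.univ : Finset (Fin T → Bool)).sup' Finset.univ_nonempty
            fun ε => ∑ t, (v t ε) ^ 2 :=
          Finset.le_sup' (fun ε : Fin T → Bool => ∑ t, (v t ε) ^ 2) (Finset.mem_univ ε)
      _ ≤ B := Finset.le_sup' (fun v => (Finset.univ : Finset (Fin T → Bool)).sup'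
          Finset.univ_nonempty fun ε => ∑ t, (v t ε) ^ 2) hv
  obtain ⟨v₀, hv₀⟩ := id hV
  have hBnonneg : 0 ≤ B := by
    have h1 : (0:ℝ) ≤ ∑ t, (v₀ t (fun _ => true)) ^ 2 :=
      Finset.sum_nonneg fun t _ => sq_nonneg _
    exact h1.trans (hB v₀ hv₀ _)
  have hn1 : (1:ℝ) ≤ (V.card : ℝ) := by
    have := Finset.card_pos.2 ⟨v₀, hv₀⟩
    exact_mod_cast this
  have hLnonneg : 0 ≤ L := Real.log_nonneg hn1
  have hcard2T : ((Finset.univ : Finset (Fin T → Bool)).card : ℝ) = 2^T := by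
    rw [Finset.card_univ]
    simp
  have key : ∀ l : ℝ, 0 < l → LHS ≤ L / l + l * B / 2 := by
    intro l hl
    -- Jensen: exp of average ≤ average of exp
    have hjensen : Real.exp (l * LHS) ≤
        (∑ ε : Fin T → Bool, Real.exp (l * V.sup' hV fun v => S v ε)) / 2^T := by
      have hw : ∀ ε ∈ (Finset.univ : Finset (Fin T → Bool)),
          (0:ℝ) ≤ ((2:ℝ)^T)⁻¹ := fun _ _ => by positivity
      have hw1 : ∑ _ε : Fin T → Bool, ((2:ℝ)^T)⁻¹ = 1 := by
        rw [Finset.sum_const, Finset.card_univ, nsmul_eq_mul]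
        have h2 : ((Fintype.card (Fin T → Bool) : ℝ)) = 2^T := by simp
        rw [h2, mul_inv_cancel₀ (by positivity : ((2:ℝ)^T) ≠ 0)]
      have hmem : ∀ ε ∈ (Finset.univ : Finset (Fin T → Bool)),
          (l * V.sup' hV fun v => S v ε) ∈ (Set.univ : Set ℝ) := fun _ _ => trivial
      have := convexOn_exp.map_sum_le hw hw1 hmem
      have heq : (∑ ε : Fin T → Bool, ((2:ℝ)^T)⁻¹ • (l * V.sup' hV fun v => S v ε))
          = l * LHS := by
        simp only [smul_eq_mul]
        rw [← Finset.mul_sum, ← Finset.mul_sum, hLHSdef, div_eq_mul_inv]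
        ring
      rw [heq] at this
      refine this.trans (le_of_eq ?_)
      simp only [smul_eq_mul]
      rw [← Finset.mul_sum, div_eq_mul_inv, mul_comm]
    have hsum : (∑ ε : Fin T → Bool, Real.exp (l * V.sup' hV fun v => S v ε))
        ≤ ∑ v ∈ V, ∑ ε : Fin T → Bool, Real.exp (l * S v ε) := by
      rw [Finset.sum_comm]
      refine Finset.sum_le_sum fun ε _ => ?_
      obtain ⟨w, hw, hweq⟩ := Finset.exists_mem_eq_sup' hV fun v => S v ε
      rw [hweq]
      exact Finset.single_le_sum (f := fun v => Real.exp (l * S v ε))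
        (fun v _ => (Real.exp_pos _).le) hw
    have hmgf : (∑ v ∈ V, ∑ ε : Fin T → Bool, Real.exp (l * S v ε))
        ≤ (V.card : ℝ) * (2^T * Real.exp (l^2 * B / 2)) := by
      calc (∑ v ∈ V, ∑ ε : Fin T → Bool, Real.exp (l * S v ε))
          ≤ ∑ _v ∈ V, 2^T * Real.exp (l^2 * B / 2) :=
            Finset.sum_le_sum fun v hv =>
              mgf_bound T v (htree v hv) l B (hB v hv)
        _ = (V.card : ℝ) * (2^T * Real.exp (l^2 * B / 2)) := by
            rw [Finset.sum_const, nsmul_eq_mul]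
    have hfinal : Real.exp (l * LHS) ≤ (V.card : ℝ) * Real.exp (l^2 * B / 2) := by
      refine hjensen.trans ?_
      rw [div_le_iff₀ (by positivity : (0:ℝ) < 2^T)]
      calc (∑ ε : Fin T → Bool, Real.exp (l * V.sup' hV fun v => S v ε))
          ≤ ∑ v ∈ V, ∑ ε : Fin T → Bool, Real.exp (l * S v ε) := hsum
        _ ≤ (V.card : ℝ) * (2^T * Real.exp (l^2 * B / 2)) := hmgf
        _ = (V.card : ℝ) * Real.exp (l^2 * B / 2) * 2^T := by ring
    have hlog : l * LHS ≤ L + l^2 * B / 2 := by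
      have h1 : l * LHS = Real.log (Real.exp (l * LHS)) := (Real.log_exp _).symm
      rw [h1]
      calc Real.log (Real.exp (l * LHS))
          ≤ Real.log ((V.card : ℝ) * Real.exp (l^2 * B / 2)) :=
            Real.log_le_log (Real.exp_pos _) hfinal
        _ = L + l^2 * B / 2 := by
            rw [Real.log_mul (by linarith) (Real.exp_ne_zero _), Real.log_exp, hLdef]
    have h2 : LHS ≤ (L + l^2 * B / 2) / l := by
      rw [le_div_iff₀ hl]
      nlinarith [hlog]
    calc LHS ≤ (L + l^2 * B / 2) / l := h2
      _ = L / l + l * B / 2 := by field_simp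
  have hsq : 0 ≤ 2 * L * B := by positivity
  rcases eq_or_lt_of_le hsq with hz | hpos
  · -- 2*L*B = 0 : show LHS ≤ 0 ≤ sqrt _
    have hLB : L = 0 ∨ B = 0 := by
      rcases mul_eq_zero.1 hz.symm with h | h
      · rcases mul_eq_zero.1 h with h' | h'
        · norm_num at h'
        · exact Or.inl h'
      · exact Or.inr h
    have hLHS0 : LHS ≤ 0 := by
      refine le_of_forall_pos_le_add fun δ hδ => ?_
      rcases hLB with h | h
      · have := key (2*δ/(B+1)) (by positivity)
        rw [h] at this
        have hb1 : 0 < B + 1 := by linarith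
        calc LHS ≤ 0 / (2*δ/(B+1)) + (2*δ/(B+1)) * B / 2 := this
          _ = δ * (B / (B+1)) := by field_simp; ring
          _ ≤ δ * 1 := by
              apply mul_le_mul_of_nonneg_left _ hδ.le
              rw [div_le_one hb1]; linarith
          _ = 0 + δ := by ring
      · have := key ((L+1)/δ) (by positivity)
        rw [h] at this
        have hl1 : 0 < L + 1 := by linarith
        calc LHS ≤ L / ((L+1)/δ) + ((L+1)/δ) * 0 / 2 := this
          _ = δ * (L / (L+1)) := by field_simp; ring
          _ ≤ δ * 1 := by
              apply mul_le_mul_of_nonneg_left _ hδ.le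
              rw [div_le_one hl1]; linarith
          _ = 0 + δ := by ring
    exact hLHS0.trans (Real.sqrt_nonneg _)
  · -- 2*L*B > 0
    have hBpos : 0 < B := by
      rcases hBnonneg.lt_or_eq with h | h
      · exact h
      · exfalso; rw [← h] at hpos; nlinarith
    set r : ℝ := Real.sqrt (2 * L * B) with hrdef
    have hr2 : r^2 = 2 * L * B := Real.sq_sqrt hsq
    have hrpos : 0 < r := Real.sqrt_pos.2 hpos
    have := key (r / B) (by positivity)
    refine this.trans ?_
    have : L / (r / B) + (r / B) * B / 2 = r := by
      field_simp
      nlinarith [hr2]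
    rw [this]
end

section
/- Let F be the probability simplex in ℝ^k and let ‖·‖ be any norm on ℝ^k. Then the function x ↦ inf_{f ∈ F} ‖f ⊙ x‖, defined on the nonnegative orthant (where f ⊙ x denotes coordinatewise product), is concave. -/
/-- For any norm `N` on `ℝ^k`, the function `x ↦ inf_{f ∈ Δ(k)} N (f ⊙ x)`
is concave on the nonnegative orthant. -/
theorem stmt_1 (k : ℕ) (hk : 0 < k) (N : (Fin k → ℝ) → ℝ)
    (hN0 : ∀ x, 0 ≤ N x)
    (hNadd : ∀ x y, N (x + y) ≤ N x + N y)
    (hNsmul : ∀ (c : ℝ) (x), N (c • x) = |c| * N x)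
    (hNzero : ∀ x, N x = 0 ↔ x = 0) :
    ConcaveOn ℝ {x : Fin k → ℝ | ∀ i, 0 ≤ x i}
      (fun x => ⨅ f : stdSimplex ℝ (Fin k), N (fun i => (f : Fin k → ℝ) i * x i)) := by
  classical
  set g : (Fin k → ℝ) → ℝ :=
    fun x => ⨅ f : stdSimplex ℝ (Fin k), N (fun i => (f : Fin k → ℝ) i * x i) with hgdef
  obtain ⟨j0⟩ : Nonempty (Fin k) := ⟨⟨0, hk⟩⟩
  have hmem : ∀ j : Fin k,
      (fun i => if i = j then (1:ℝ) else 0) ∈ stdSimplex ℝ (Fin k) := by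
    intro j
    refine ⟨fun i => ?_, ?_⟩
    · by_cases h : i = j <;> simp [h]
    · simp
  haveI : Nonempty (stdSimplex ℝ (Fin k)) := ⟨⟨_, hmem j0⟩⟩
  have hbdd : ∀ x : Fin k → ℝ, BddBelow
      (Set.range fun f : stdSimplex ℝ (Fin k) => N (fun i => (f : Fin k → ℝ) i * x i)) :=
    fun x => ⟨0, by rintro _ ⟨f, rfl⟩; exact hN0 _⟩
  have g_le : ∀ (x : Fin k → ℝ) (f : stdSimplex ℝ (Fin k)),
      g x ≤ N (fun i => (f : Fin k → ℝ) i * x i) := fun x f => ciInf_le (hbdd x) f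
  have g_nonneg : ∀ x, 0 ≤ g x := fun x => le_ciInf fun f => hN0 _
  have hNzero' : N 0 = 0 := (hNzero 0).2 rfl
  have g_zero : ∀ x : Fin k → ℝ, (∃ j, x j = 0) → g x = 0 := by
    rintro x ⟨j, hj⟩
    refine le_antisymm ?_ (g_nonneg x)
    have h := g_le x ⟨_, hmem j⟩
    have heq : (fun i => (if i = j then (1:ℝ) else 0) * x i) = 0 := by
      funext i
      by_cases hij : i = j <;> simp [hij, hj]
    change g x ≤ N (fun i => (if i = j then (1:ℝ) else 0) * x i) at h
    rw [heq, hNzero'] at h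
    exact h
  -- key substitution lemma
  have key : ∀ (x w : Fin k → ℝ), (∀ i, 0 < x i) → (∀ i, 0 ≤ w i) →
      ∀ f : stdSimplex ℝ (Fin k),
      g x * (∑ i, (f : Fin k → ℝ) i * w i / x i) ≤ N (fun i => (f : Fin k → ℝ) i * w i) := by
    intro x w hx hw f
    set S := ∑ i, (f : Fin k → ℝ) i * w i / x i with hSdef
    have hSnn : 0 ≤ S :=
      Finset.sum_nonneg fun i _ => div_nonneg (mul_nonneg (f.2.1 i) (hw i)) (hx i).le
    rcases eq_or_lt_of_le hSnn with h0 | hSpos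
    · rw [← h0, mul_zero]; exact hN0 _
    · set f' : Fin k → ℝ := fun i => (f : Fin k → ℝ) i * w i / x i / S with hf'def
      have hf' : f' ∈ stdSimplex ℝ (Fin k) := by
        refine ⟨fun i => div_nonneg (div_nonneg (mul_nonneg (f.2.1 i) (hw i)) (hx i).le) hSnn, ?_⟩
        rw [← Finset.sum_div, ← hSdef, div_self hSpos.ne']
      have h := g_le x ⟨f', hf'⟩
      have heq : (fun i => f' i * x i) = S⁻¹ • (fun i => (f : Fin k → ℝ) i * w i) := by
        funext i
        simp only [hf'def, Pi.smul_apply, smul_eq_mul]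
        have hxi := (hx i).ne'
        have hS := hSpos.ne'
        field_simp
      change g x ≤ N (fun i => f' i * x i) at h
      rw [heq, hNsmul, abs_of_pos (inv_pos.2 hSpos)] at h
      have := mul_le_mul_of_nonneg_right h hSnn
      calc g x * S ≤ S⁻¹ * N (fun i => (f : Fin k → ℝ) i * w i) * S := this
        _ = N (fun i => (f : Fin k → ℝ) i * w i) := by field_simp
  -- Cauchy-Schwarz lemma
  have hCS : ∀ (u v : Fin k → ℝ), (∀ i, 0 < u i) → (∀ i, 0 < v i) →
      ∀ f : stdSimplex ℝ (Fin k),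
      1 ≤ (∑ i, (f : Fin k → ℝ) i * u i / v i) * (∑ i, (f : Fin k → ℝ) i * v i / u i) := by
    intro u v hu hv f
    have hcs := Finset.sum_mul_sq_le_sq_mul_sq Finset.univ
      (fun i => Real.sqrt ((f : Fin k → ℝ) i * u i / v i))
      (fun i => Real.sqrt ((f : Fin k → ℝ) i * v i / u i))
    have h1 : ∀ i, Real.sqrt ((f : Fin k → ℝ) i * u i / v i) *
        Real.sqrt ((f : Fin k → ℝ) i * v i / u i) = (f : Fin k → ℝ) i := by
      intro i
      rw [← Real.sqrt_mul (div_nonneg (mul_nonneg (stdSimplex.zero_le f i) (hu i).le) (hv i).le)]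
      have : (f : Fin k → ℝ) i * u i / v i * ((f : Fin k → ℝ) i * v i / u i)
          = ((f : Fin k → ℝ) i) ^ 2 := by
        have hui := (hu i).ne'
        have hvi := (hv i).ne'
        field_simp
      rw [this, Real.sqrt_sq (stdSimplex.zero_le f i)]
    have h2 : ∀ i, Real.sqrt ((f : Fin k → ℝ) i * u i / v i) ^ 2
        = (f : Fin k → ℝ) i * u i / v i := fun i =>
      Real.sq_sqrt (div_nonneg (mul_nonneg (f.2.1 i) (hu i).le) (hv i).le)
    have h3 : ∀ i, Real.sqrt ((f : Fin k → ℝ) i * v i / u i) ^ 2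
        = (f : Fin k → ℝ) i * v i / u i := fun i =>
      Real.sq_sqrt (div_nonneg (mul_nonneg (f.2.1 i) (hv i).le) (hu i).le)
    simp only [h1, h2, h3] at hcs
    rwa [stdSimplex.sum_eq_one f, one_pow] at hcs
  have hfpos : ∀ f : stdSimplex ℝ (Fin k), ∃ i, 0 < (f : Fin k → ℝ) i := by
    intro f
    by_contra h
    push_neg at h
    have hz : ∀ i, (f : Fin k → ℝ) i = 0 := fun i => le_antisymm (h i) (f.2.1 i)
    have := stdSimplex.sum_eq_one f
    simp [hz] at this
  constructor
  · intro x hx y hy a b ha hb hab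
    intro i
    exact add_nonneg (mul_nonneg ha (hx i)) (mul_nonneg hb (hy i))
  · intro x hx y hy a b ha hb hab
    simp only [smul_eq_mul]
    refine le_ciInf fun f => ?_
    set z : Fin k → ℝ := fun i => a * x i + b * y i with hzdef
    have hzeq : (fun i => (f : Fin k → ℝ) i * (a • x + b • y) i)
        = fun i => (f : Fin k → ℝ) i * z i := by
      funext i; simp [hzdef]
    rw [hzeq]
    have hznn : ∀ i, 0 ≤ z i :=
      fun i => add_nonneg (mul_nonneg ha (hx i)) (mul_nonneg hb (hy i))
    set M := N (fun i => (f : Fin k → ℝ) i * z i) with hMdef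
    have hMnn : 0 ≤ M := hN0 _
    -- helper for the "one side degenerate" case
    have side : ∀ (c : ℝ) (v : Fin k → ℝ), 0 ≤ c → (∀ i, 0 < v i) →
        (∀ i, c * v i ≤ z i) → c * g v ≤ M := by
      intro c v hc hv hcv
      have hS : c ≤ ∑ i, (f : Fin k → ℝ) i * z i / v i := by
        calc c = ∑ i, (f : Fin k → ℝ) i * c := by
              rw [← Finset.sum_mul, stdSimplex.sum_eq_one f, one_mul]
          _ ≤ ∑ i, (f : Fin k → ℝ) i * z i / v i := by
              refine Finset.sum_le_sum fun i _ => ?_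
              rw [le_div_iff₀ (hv i)]
              calc (f : Fin k → ℝ) i * c * v i = (f : Fin k → ℝ) i * (c * v i) := by ring
                _ ≤ (f : Fin k → ℝ) i * z i :=
                  mul_le_mul_of_nonneg_left (hcv i) (f.2.1 i)
      calc c * g v ≤ (∑ i, (f : Fin k → ℝ) i * z i / v i) * g v :=
            mul_le_mul_of_nonneg_right hS (g_nonneg v)
        _ = g v * (∑ i, (f : Fin k → ℝ) i * z i / v i) := by ring
        _ ≤ M := key v z hv hznn f
    by_cases hxz : ∃ j, x j = 0
    · rw [g_zero x hxz, mul_zero, zero_add]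
      by_cases hyz : ∃ j, y j = 0
      · rw [g_zero y hyz, mul_zero]; exact hMnn
      · push_neg at hyz
        have hy' : ∀ i, 0 < y i := fun i => lt_of_le_of_ne (hy i) (Ne.symm (hyz i))
        refine side b y hb hy' fun i => ?_
        have h0 : 0 ≤ a * x i := mul_nonneg ha (hx i)
        simp only [hzdef]
        linarith
    · push_neg at hxz
      have hx' : ∀ i, 0 < x i := fun i => lt_of_le_of_ne (hx i) (Ne.symm (hxz i))
      by_cases hyz : ∃ j, y j = 0
      · rw [g_zero y hyz, mul_zero, add_zero]
        refine side a x ha hx' fun i => ?_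
        have h0 : 0 ≤ b * y i := mul_nonneg hb (hy i)
        simp only [hzdef]
        linarith
      · push_neg at hyz
        have hy' : ∀ i, 0 < y i := fun i => lt_of_le_of_ne (hy i) (Ne.symm (hyz i))
        rcases eq_or_lt_of_le ha with rfl | ha'
        · have hb1 : b = 1 := by linarith
          subst hb1
          simpa using side 1 y zero_le_one hy' fun i => by simp [hzdef]
        · rcases eq_or_lt_of_le hb with rfl | hb'
          · have ha1 : a = 1 := by linarith
            subst ha1
            simpa using side 1 x zero_le_one hx' fun i => by simp [hzdef]
          · -- main case
            have hz' : ∀ i, 0 < z i := fun i =>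
              add_pos (mul_pos ha' (hx' i)) (mul_pos hb' (hy' i))
            set Sx := ∑ i, (f : Fin k → ℝ) i * z i / x i with hSxdef
            set Sy := ∑ i, (f : Fin k → ℝ) i * z i / y i with hSydef
            set Tx := ∑ i, (f : Fin k → ℝ) i * x i / z i with hTxdef
            set Ty := ∑ i, (f : Fin k → ℝ) i * y i / z i with hTydef
            obtain ⟨i0, hi0⟩ := hfpos f
            have hSx : 0 < Sx := Finset.sum_pos'
              (fun i _ => div_nonneg (mul_nonneg (f.2.1 i) (hz' i).le) (hx' i).le)
              ⟨i0, Finset.mem_univ i0, div_pos (mul_pos hi0 (hz' i0)) (hx' i0)⟩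
            have hSy : 0 < Sy := Finset.sum_pos'
              (fun i _ => div_nonneg (mul_nonneg (f.2.1 i) (hz' i).le) (hy' i).le)
              ⟨i0, Finset.mem_univ i0, div_pos (mul_pos hi0 (hz' i0)) (hy' i0)⟩
            have hCSx : 1 ≤ Sx * Tx := hCS z x hz' hx' f
            have hCSy : 1 ≤ Sy * Ty := hCS z y hz' hy' f
            have hT : a * Tx + b * Ty = 1 := by
              rw [hTxdef, hTydef, Finset.mul_sum, Finset.mul_sum,
                ← Finset.sum_add_distrib, ← stdSimplex.sum_eq_one f]
              refine Finset.sum_congr rfl fun i _ => ?_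
              have hzi := (hz' i).ne'
              field_simp
              simp [hzdef]
            have h1 : g x ≤ M / Sx := by
              rw [le_div_iff₀ hSx]; exact key x z hx' hznn f
            have h2 : g y ≤ M / Sy := by
              rw [le_div_iff₀ hSy]; exact key y z hy' hznn f
            have h3 : a / Sx ≤ a * Tx := by
              rw [div_le_iff₀ hSx]; nlinarith
            have h4 : b / Sy ≤ b * Ty := by
              rw [div_le_iff₀ hSy]; nlinarith
            calc a * g x + b * g y ≤ a * (M / Sx) + b * (M / Sy) :=
                  add_le_add (mul_le_mul_of_nonneg_left h1 ha)
                    (mul_le_mul_of_nonneg_left h2 hb)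
              _ = M * (a / Sx + b / Sy) := by ring
              _ ≤ M * (a * Tx + b * Ty) :=
                  mul_le_mul_of_nonneg_left (add_le_add h3 h4) hMnn
              _ = M := by rw [hT, mul_one]
end

section
/- Let F be the probability simplex in ℝ^k, ‖·‖ any norm on ℝ^k, and x, y vectors in the positive orthant. Then inf_{f∈F} ‖f ⊙ (x+y)‖ ≥ inf_{f∈F} ‖f ⊙ x‖ + inf_{f∈F} ‖f ⊙ y‖. -/
/-- Superadditivity of `x ↦ inf_{f ∈ Δ(k)} N (f ⊙ x)` over the positive orthant,
for any norm `N` on `ℝ^k`. -/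
theorem stmt_2 (k : ℕ) (hk : 0 < k) (N : (Fin k → ℝ) → ℝ)
    (hN0 : ∀ x, 0 ≤ N x)
    (hNadd : ∀ x y, N (x + y) ≤ N x + N y)
    (hNsmul : ∀ (c : ℝ) (x), N (c • x) = |c| * N x)
    (hNzero : ∀ x, N x = 0 ↔ x = 0)
    (x y : Fin k → ℝ) (hx : ∀ i, 0 < x i) (hy : ∀ i, 0 < y i) :
    (⨅ f : stdSimplex ℝ (Fin k), N (fun i => (f : Fin k → ℝ) i * x i))
      + (⨅ f : stdSimplex ℝ (Fin k), N (fun i => (f : Fin k → ℝ) i * y i))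
      ≤ ⨅ f : stdSimplex ℝ (Fin k), N (fun i => (f : Fin k → ℝ) i * (x i + y i)) := by
  haveI hne : Nonempty (stdSimplex ℝ (Fin k)) := by
    refine ⟨⟨fun _ => (k : ℝ)⁻¹, fun i => by positivity, ?_⟩⟩
    have hk' : (k : ℝ) ≠ 0 := Nat.cast_ne_zero.mpr hk.ne'
    simp [Finset.sum_const, Finset.card_univ, mul_inv_cancel₀ hk']
  have bddx : BddBelow (Set.range fun f : stdSimplex ℝ (Fin k) =>
      N (fun i => (f : Fin k → ℝ) i * x i)) :=
    ⟨0, by rintro a ⟨f, rfl⟩; exact hN0 _⟩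
  have bddy : BddBelow (Set.range fun f : stdSimplex ℝ (Fin k) =>
      N (fun i => (f : Fin k → ℝ) i * y i)) :=
    ⟨0, by rintro a ⟨f, rfl⟩; exact hN0 _⟩
  refine le_ciInf fun f => ?_
  obtain ⟨f, hf0, hf1⟩ := f
  set c : Fin k → ℝ := fun i => f i * (x i + y i) with hc
  have hc0 : ∀ i, 0 ≤ c i := fun i => mul_nonneg (hf0 i) (by nlinarith [hx i, hy i])
  set α : ℝ := ∑ i, c i / x i with hα
  set β : ℝ := ∑ i, c i / y i with hβ
  have hα1 : 1 ≤ α := by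
    rw [hα, ← hf1]
    refine Finset.sum_le_sum fun i _ => ?_
    rw [le_div_iff₀ (hx i)]; simp only [hc]
    have := hf0 i; have := hx i; have := hy i
    nlinarith
  have hβ1 : 1 ≤ β := by
    rw [hβ, ← hf1]
    refine Finset.sum_le_sum fun i _ => ?_
    rw [le_div_iff₀ (hy i)]; simp only [hc]
    have := hf0 i; have := hx i; have := hy i
    nlinarith
  have hα0 : 0 < α := lt_of_lt_of_le one_pos hα1
  have hβ0 : 0 < β := lt_of_lt_of_le one_pos hβ1
  -- the rescaled simplex points
  have hgx : (⨅ f : stdSimplex ℝ (Fin k), N (fun i => (f : Fin k → ℝ) i * x i))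
      ≤ α⁻¹ * N c := by
    have hg : (fun i => c i / (x i * α)) ∈ stdSimplex ℝ (Fin k) := by
      constructor
      · intro i
        exact div_nonneg (hc0 i) (le_of_lt (mul_pos (hx i) hα0))
      · have : ∀ i : Fin k, c i / (x i * α) = (c i / x i) * α⁻¹ := by
          intro i; rw [← div_div, div_eq_mul_inv]
        simp_rw [this, ← Finset.sum_mul, ← hα]
        exact mul_inv_cancel₀ hα0.ne'
    have key : (fun i => c i / (x i * α) * x i) = α⁻¹ • c := by
      funext i
      have hxi := (hx i).ne'
      field_simp
      rw [Pi.smul_apply, smul_eq_mul, ← mul_assoc, mul_one_div_cancel hα0.ne', one_mul]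
    calc (⨅ f : stdSimplex ℝ (Fin k), N (fun i => (f : Fin k → ℝ) i * x i))
        ≤ N (fun i => c i / (x i * α) * x i) := ciInf_le bddx ⟨_, hg⟩
      _ = α⁻¹ * N c := by rw [key, hNsmul, abs_of_pos (inv_pos.mpr hα0)]
  have hgy : (⨅ f : stdSimplex ℝ (Fin k), N (fun i => (f : Fin k → ℝ) i * y i))
      ≤ β⁻¹ * N c := by
    have hg : (fun i => c i / (y i * β)) ∈ stdSimplex ℝ (Fin k) := by
      constructor
      · intro i
        exact div_nonneg (hc0 i) (le_of_lt (mul_pos (hy i) hβ0))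
      · have : ∀ i : Fin k, c i / (y i * β) = (c i / y i) * β⁻¹ := by
          intro i; rw [← div_div, div_eq_mul_inv]
        simp_rw [this, ← Finset.sum_mul, ← hβ]
        exact mul_inv_cancel₀ hβ0.ne'
    have key : (fun i => c i / (y i * β) * y i) = β⁻¹ • c := by
      funext i
      have hyi := (hy i).ne'
      field_simp
      rw [Pi.smul_apply, smul_eq_mul, ← mul_assoc, mul_one_div_cancel hβ0.ne', one_mul]
    calc (⨅ f : stdSimplex ℝ (Fin k), N (fun i => (f : Fin k → ℝ) i * y i))
        ≤ N (fun i => c i / (y i * β) * y i) := ciInf_le bddy ⟨_, hg⟩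
      _ = β⁻¹ * N c := by rw [key, hNsmul, abs_of_pos (inv_pos.mpr hβ0)]
  -- harmonic inequality: α⁻¹ + β⁻¹ ≤ 1
  have h1 : (1 : ℝ) = ∑ i, c i / (x i + y i) := by
    rw [← hf1]
    refine Finset.sum_congr rfl fun i _ => ?_
    simp only [hc]
    rw [mul_div_assoc, div_self (add_pos (hx i) (hy i)).ne', mul_one]
  have hkey : ∀ s t : ℝ, 0 ≤ s → 0 ≤ t → s + t = 1 → (1:ℝ) ≤ s^2 * α + t^2 * β := by
    intro s t hs0 ht0 hst
    have base : ∀ a b : ℝ, 0 < a → 0 < b → 1/(a+b) ≤ s^2/a + t^2/b := by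
      intro a b ha hb
      rw [div_add_div _ _ ha.ne' hb.ne',
        div_le_div_iff₀ (by positivity) (by positivity)]
      have ht : t = 1 - s := by linarith
      subst ht
      nlinarith [sq_nonneg (s*b - (1-s)*a), mul_pos ha hb]
    have hsum : s^2*α + t^2*β = ∑ i, (s^2*(c i/x i) + t^2*(c i/y i)) := by
      rw [hα, hβ, Finset.mul_sum, Finset.mul_sum, Finset.sum_add_distrib]
    rw [h1, hsum]
    refine Finset.sum_le_sum fun i _ => ?_
    have hxi := hx i; have hyi := hy i; have hci := hc0 i
    calc c i/(x i+y i) = c i * (1/(x i + y i)) := by ring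
      _ ≤ c i * (s^2/x i + t^2/y i) :=
          mul_le_mul_of_nonneg_left (base _ _ hxi hyi) hci
      _ = s^2*(c i/x i) + t^2*(c i/y i) := by ring
  have hαβ : α⁻¹ + β⁻¹ ≤ 1 := by
    have hab : (0:ℝ) < α + β := by positivity
    have hinst := hkey (β/(α+β)) (α/(α+β)) (by positivity) (by positivity)
      (by rw [← add_div, div_eq_one_iff_eq hab.ne']; ring)
    have e : (β/(α+β))^2*α + (α/(α+β))^2*β = α*β/(α+β) := by
      field_simp
      ring
    rw [e, le_div_iff₀ hab] at hinst
    rw [inv_eq_one_div, inv_eq_one_div, div_add_div _ _ hα0.ne' hβ0.ne',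
      div_le_one (by positivity)]
    linarith
  have hNc : 0 ≤ N c := hN0 c
  calc (⨅ f : stdSimplex ℝ (Fin k), N (fun i => (f : Fin k → ℝ) i * x i))
      + (⨅ f : stdSimplex ℝ (Fin k), N (fun i => (f : Fin k → ℝ) i * y i))
      ≤ α⁻¹ * N c + β⁻¹ * N c := add_le_add hgx hgy
    _ = (α⁻¹ + β⁻¹) * N c := by ring
    _ ≤ 1 * N c := mul_le_mul_of_nonneg_right hαβ hNc
    _ = N (fun i => f i * (x i + y i)) := by rw [one_mul, hc]
end

section
/- Let f ∈ Δ(k) and x, y ∈ ℝ^k with strictly positive coordinates. Define Z_g = Σ_i f_i (1 + y_i/x_i) and Z_h = Σ_i f_i (1 + x_i/y_i). Then 1/Z_g + 1/Z_h ≤ 1. -/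
/-- For `f` in the probability simplex and `x, y` with strictly positive coordinates,
with `Z_g = ∑ i, f i (1 + y i / x i)` and `Z_h = ∑ i, f i (1 + x i / y i)`,
one has `1/Z_g + 1/Z_h ≤ 1`. -/
theorem stmt_3 (k : ℕ) (f x y : Fin k → ℝ)
    (hf : f ∈ stdSimplex ℝ (Fin k))
    (hx : ∀ i, 0 < x i) (hy : ∀ i, 0 < y i)
    (hfpos : ∃ i, 0 < f i) :
    1 / (∑ i, f i * (1 + y i / x i)) + 1 / (∑ i, f i * (1 + x i / y i)) ≤ 1 := by
  obtain ⟨hf0, hf1⟩ := hf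
  obtain ⟨j, hj⟩ := hfpos
  set A := ∑ i, f i * (y i / x i) with hA
  set B := ∑ i, f i * (x i / y i) with hB
  have hApos : 0 < A := by
    apply Finset.sum_pos' (fun i _ => by have := hf0 i; have := hx i; have := hy i; positivity)
    exact ⟨j, Finset.mem_univ j, by have := hx j; have := hy j; positivity⟩
  have hBpos : 0 < B := by
    apply Finset.sum_pos' (fun i _ => by have := hf0 i; have := hx i; have := hy i; positivity)
    exact ⟨j, Finset.mem_univ j, by have := hx j; have := hy j; positivity⟩
  have hCS : (∑ i, Real.sqrt (f i * (y i / x i)) * Real.sqrt (f i * (x i / y i))) ^ 2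
      ≤ (∑ i, Real.sqrt (f i * (y i / x i)) ^ 2) * (∑ i, Real.sqrt (f i * (x i / y i)) ^ 2) :=
    Finset.sum_mul_sq_le_sq_mul_sq _ _ _
  have h1 : ∀ i : Fin k, Real.sqrt (f i * (y i / x i)) * Real.sqrt (f i * (x i / y i)) = f i := by
    intro i
    have h0 := hf0 i
    have hxp := hx i
    have hyp := hy i
    rw [← Real.sqrt_mul (by positivity)]
    have : f i * (y i / x i) * (f i * (x i / y i)) = (f i) ^ 2 := by
      field_simp
    rw [this, Real.sqrt_sq h0]
  have h2 : ∀ i : Fin k, Real.sqrt (f i * (y i / x i)) ^ 2 = f i * (y i / x i) := by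
    intro i
    have h0 := hf0 i; have hxp := hx i; have hyp := hy i
    exact Real.sq_sqrt (by positivity)
  have h3 : ∀ i : Fin k, Real.sqrt (f i * (x i / y i)) ^ 2 = f i * (x i / y i) := by
    intro i
    have h0 := hf0 i; have hxp := hx i; have hyp := hy i
    exact Real.sq_sqrt (by positivity)
  simp only [h1, h2, h3, hf1] at hCS
  have hAB : 1 ≤ A * B := by simpa using hCS
  have e1 : ∑ i, f i * (1 + y i / x i) = 1 + A := by
    simp only [mul_add, mul_one, Finset.sum_add_distrib, hf1, hA]
  have e2 : ∑ i, f i * (1 + x i / y i) = 1 + B := by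
    simp only [mul_add, mul_one, Finset.sum_add_distrib, hf1, hB]
  rw [e1, e2]
  rw [div_add_div _ _ (by positivity) (by positivity), div_le_one (by positivity)]
  nlinarith
end

section
/- For any real q with 2 ≤ q < ∞, the function G(z) = ‖z‖_q^2 on ℝ^d is (2(q−1), 2)-uniformly smooth; that is, for all z, z' ∈ ℝ^d, ‖z‖_q^2 ≤ ‖z'‖_q^2 + ⟨∇(‖·‖_q^2)(z'), z − z'⟩ + (q−1)‖z − z'‖_q^2. -/
open Real Filter Asymptotics

private lemma sga (x : ℝ) : Real.sign x * |x| = x := by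
  rcases lt_trichotomy x 0 with h | rfl | h
  · rw [Real.sign_of_neg h, abs_of_neg h]; ring
  · simp [Real.sign_zero]
  · rw [Real.sign_of_pos h, abs_of_pos h]; ring

private lemma abs_rpow_succ {r : ℝ} (hr : 0 < r) (x : ℝ) : |x| ^ r * |x| = |x| ^ (r + 1) := by
  rcases eq_or_ne x 0 with rfl | hx
  · simp [Real.zero_rpow hr.ne', Real.zero_rpow (by positivity : r + 1 ≠ 0)]
  · rw [Real.rpow_add_one (abs_ne_zero.2 hx)]

private lemma littleO_helper {r : ℝ} (hr : 0 < r) (g : ℝ → ℝ) (hg : ∀ h, |g h| ≤ |h|) :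
    (fun h : ℝ => |h| ^ r * g h) =o[nhds (0:ℝ)] (fun h : ℝ => h) := by
  rw [isLittleO_iff]
  intro c hc
  rw [Metric.eventually_nhds_iff]
  refine ⟨c ^ (1/r), Real.rpow_pos_of_pos hc _, fun {h} hdist => ?_⟩
  have h1 : |h| < c ^ (1/r) := by simpa [Real.dist_eq] using hdist
  have h2 : |h| ^ r ≤ c := by
    calc |h| ^ r ≤ (c ^ (1/r)) ^ r := Real.rpow_le_rpow (abs_nonneg _) h1.le hr.le
      _ = c := by
        rw [← Real.rpow_mul hc.le, one_div, inv_mul_cancel₀ hr.ne', Real.rpow_one]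
  calc ‖|h| ^ r * g h‖ = |h| ^ r * |g h| := by
        rw [norm_mul, Real.norm_eq_abs, Real.norm_eq_abs, abs_of_nonneg (Real.rpow_nonneg (abs_nonneg _) _)]
    _ ≤ c * |h| := by
        apply mul_le_mul h2 (hg h) (abs_nonneg _) hc.le
    _ = c * ‖h‖ := by rw [Real.norm_eq_abs]

private lemma myHasDerivAt_abs_rpow {q : ℝ} (hq : 1 < q) (x : ℝ) :
    HasDerivAt (fun y : ℝ => |y| ^ q) (Real.sign x * (q * |x| ^ (q - 1))) x := by
  rcases lt_trichotomy x 0 with hx | rfl | hx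
  · have h1 : HasDerivAt (fun y : ℝ => (-y) ^ q) (q * (-x) ^ (q - 1) * (-1)) x :=
      (Real.hasDerivAt_rpow_const (p := q) (Or.inl (by linarith))).comp x (hasDerivAt_neg x)
    have h2 : (fun y : ℝ => (-y) ^ q) =ᶠ[nhds x] fun y => |y| ^ q := by
      filter_upwards [Iio_mem_nhds hx] with y hy
      rw [abs_of_neg hy]
    have := h1.congr_of_eventuallyEq h2.symm
    convert this using 1
    · rfl
    · rfl
    rw [Real.sign_of_neg hx, abs_of_neg hx]; ring
  · rw [Real.sign_zero, zero_mul]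
    rw [hasDerivAt_iff_isLittleO]
    simp only [zero_rpow (by positivity : q ≠ 0), abs_zero, smul_zero, sub_zero, zero_mul]
    have heq : (fun y : ℝ => |y| ^ q) = fun y => |y| ^ (q - 1) * |y| := by
      funext y; rw [abs_rpow_succ (by linarith) y, sub_add_cancel]
    rw [heq]
    have := littleO_helper (r := q - 1) (by linarith) (fun h => |h|) (fun h => by simp)
    simpa using this
  · have h1 : HasDerivAt (fun y : ℝ => y ^ q) (q * x ^ (q - 1)) x :=
      Real.hasDerivAt_rpow_const (p := q) (Or.inl hx.ne')
    have h2 : (fun y : ℝ => y ^ q) =ᶠ[nhds x] fun y => |y| ^ q := by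
      filter_upwards [Ioi_mem_nhds hx] with y hy
      rw [abs_of_pos hy]
    have := h1.congr_of_eventuallyEq h2.symm
    convert this using 1
    · rfl
    · rfl
    rw [Real.sign_of_pos hx, abs_of_pos hx]; ring

private lemma myHasDerivAt_D1 {q : ℝ} (hq : 2 ≤ q) (x : ℝ) :
    HasDerivAt (fun y : ℝ => Real.sign y * (q * |y| ^ (q - 1)))
      (q * (q - 1) * |x| ^ (q - 2)) x := by
  have hq1 : (1:ℝ) < q := by linarith
  rcases lt_trichotomy x 0 with hx | rfl | hx
  · have h1 : HasDerivAt (fun y : ℝ => (-y) ^ (q - 1)) ((q-1) * (-x) ^ (q - 1 - 1) * (-1)) x :=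
      (Real.hasDerivAt_rpow_const (p := q - 1) (Or.inl (by linarith))).comp x (hasDerivAt_neg x)
    have h2 := ((h1.const_mul q).neg)
    have h3 : (fun y : ℝ => -(q * (-y) ^ (q - 1))) =ᶠ[nhds x] fun y => Real.sign y * (q * |y| ^ (q - 1)) := by
      filter_upwards [Iio_mem_nhds hx] with y hy
      rw [abs_of_neg hy, Real.sign_of_neg hy]; ring
    have := h2.congr_of_eventuallyEq h3.symm
    convert this using 1
    · rfl
    · rfl
    rw [abs_of_neg hx, show q - 1 - 1 = q - 2 by ring]; ring
  · rcases eq_or_lt_of_le hq with h2 | h2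
    · -- q = 2
      subst h2
      have heq : (fun y : ℝ => Real.sign y * ((2:ℝ) * |y| ^ ((2:ℝ) - 1))) = fun y => 2 * y := by
        funext y
        rw [show (2:ℝ) - 1 = 1 by norm_num, Real.rpow_one]
        rw [show Real.sign y * (2 * |y|) = 2 * (Real.sign y * |y|) by ring, sga]
      rw [heq]
      have : HasDerivAt (fun y : ℝ => 2 * y) 2 0 := by
        simpa using (hasDerivAt_id (0:ℝ)).const_mul (2:ℝ)
      convert this using 1
      norm_num
    · -- q > 2
      have hne : q - 2 ≠ 0 := by linarith
      rw [abs_zero, Real.zero_rpow hne, mul_zero]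
      rw [hasDerivAt_iff_isLittleO]
      simp only [Real.sign_zero, zero_mul, abs_zero, smul_zero, sub_zero]
      have heq : (fun y : ℝ => Real.sign y * (q * |y| ^ (q - 1)))
          = fun y => q * (|y| ^ (q - 2) * (Real.sign y * |y|)) := by
        funext y
        rcases eq_or_ne y 0 with rfl | hy
        · simp [Real.sign_zero, Real.zero_rpow (by linarith : q - (1:ℝ) ≠ 0)]
        · rw [show |y| ^ (q-2) * (Real.sign y * |y|) = Real.sign y * (|y| ^ (q-2) * |y|) by ring,
            abs_rpow_succ (by linarith) y, show q - 2 + 1 = q - 1 by ring]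
          ring
      have hg : ∀ h : ℝ, |(fun h : ℝ => Real.sign h * |h|) h| ≤ |h| := by
        intro h
        rw [show (fun h : ℝ => Real.sign h * |h|) h = Real.sign h * |h| from rfl, sga]
      have hlo := (littleO_helper (r := q - 2) (by linarith) (fun h => Real.sign h * |h|)
        hg).const_mul_left q
      calc (fun y : ℝ => Real.sign y * (q * |y| ^ (q - 1)))
          = fun y => q * (|y| ^ (q - 2) * (Real.sign y * |y|)) := heq
        _ =o[nhds 0] fun h => h := hlo
  · have h1 : HasDerivAt (fun y : ℝ => y ^ (q - 1)) ((q-1) * x ^ (q - 1 - 1)) x :=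
      Real.hasDerivAt_rpow_const (p := q - 1) (Or.inl hx.ne')
    have h2 := h1.const_mul q
    have h3 : (fun y : ℝ => q * y ^ (q - 1)) =ᶠ[nhds x] fun y => Real.sign y * (q * |y| ^ (q - 1)) := by
      filter_upwards [Ioi_mem_nhds hx] with y hy
      rw [abs_of_pos hy, Real.sign_of_pos hy]; ring
    have := h2.congr_of_eventuallyEq h3.symm
    convert this using 1
    · rfl
    · rfl
    rw [abs_of_pos hx, show q - 1 - 1 = q - 2 by ring]; ring

open Finset in
private lemma hasDerivAt_Sline {d : ℕ} {q : ℝ} (hq : 2 ≤ q) (z' u : Fin d → ℝ) (t : ℝ) :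
    HasDerivAt (fun t : ℝ => ∑ i, |z' i + t * u i| ^ q)
      (∑ i, Real.sign (z' i + t * u i) * (q * |z' i + t * u i| ^ (q - 1)) * u i) t := by
  apply HasDerivAt.fun_sum
  intro i _
  have hline : HasDerivAt (fun t : ℝ => z' i + t * u i) (u i) t :=
    (hasDerivAt_mul_const (u i)).const_add (z' i)
  exact (myHasDerivAt_abs_rpow (by linarith) (z' i + t * u i)).comp t hline

open Finset in
private lemma hasDerivAt_Aline {d : ℕ} {q : ℝ} (hq : 2 ≤ q) (z' u : Fin d → ℝ) (t : ℝ) :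
    HasDerivAt (fun t : ℝ => ∑ i, Real.sign (z' i + t * u i) * (q * |z' i + t * u i| ^ (q - 1)) * u i)
      (∑ i, q * (q - 1) * |z' i + t * u i| ^ (q - 2) * u i * u i) t := by
  apply HasDerivAt.fun_sum
  intro i _
  have hline : HasDerivAt (fun t : ℝ => z' i + t * u i) (u i) t :=
    (hasDerivAt_mul_const (u i)).const_add (z' i)
  exact (((myHasDerivAt_D1 hq (z' i + t * u i)).comp t hline).mul_const (u i))

open Finset in
private lemma holder_aux {q : ℝ} (hq : 2 ≤ q) {d : ℕ} (x v : Fin d → ℝ) :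
    ∑ i, |x i| ^ (q - 2) * (v i * v i)
      ≤ (∑ i, |x i| ^ q) ^ ((q - 2) / q) * (∑ i, |v i| ^ q) ^ (2 / q) := by
  have habs : ∀ i : Fin d, v i * v i = |v i| ^ (2:ℝ) := by
    intro i
    rw [show ((2:ℝ) = ((2:ℕ) : ℝ)) by norm_num, Real.rpow_natCast, sq_abs, sq]
  rcases eq_or_lt_of_le hq with h2 | h2
  · subst h2
    simp only [sub_self, Real.rpow_zero, one_mul, zero_div]
    rw [show (2:ℝ)/2 = 1 by norm_num, Real.rpow_one]
    exact le_of_eq (Finset.sum_congr rfl fun i _ => habs i)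
  · have hq0 : (0:ℝ) < q := by linarith
    have hq2 : (0:ℝ) < q - 2 := by linarith
    have hpq : Real.HolderConjugate (q / (q-2)) (q / 2) := by
      rw [Real.holderConjugate_iff]; constructor
      · rw [lt_div_iff₀ hq2]; linarith
      · rw [inv_div, inv_div]; field_simp; ring
    have H := Real.inner_le_Lp_mul_Lq (s := Finset.univ)
      (f := fun i => |x i| ^ (q-2)) (g := fun i => |v i| ^ (2:ℝ)) hpq
    have e1 : (∑ i, |(fun i => |x i| ^ (q-2)) i| ^ (q/(q-2))) = ∑ i, |x i| ^ q := by
      refine Finset.sum_congr rfl fun i _ => ?_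
      show |(|x i| ^ (q-2))| ^ (q/(q-2)) = |x i| ^ q
      rw [abs_of_nonneg (Real.rpow_nonneg (abs_nonneg (x i)) (q-2)),
        ← Real.rpow_mul (abs_nonneg (x i))]
      congr 1; field_simp
    have e2 : (∑ i, |(fun i => |v i| ^ (2:ℝ)) i| ^ (q/2)) = ∑ i, |v i| ^ q := by
      refine Finset.sum_congr rfl fun i _ => ?_
      show |(|v i| ^ (2:ℝ))| ^ (q/2) = |v i| ^ q
      rw [abs_of_nonneg (Real.rpow_nonneg (abs_nonneg (v i)) (2:ℝ)),
        ← Real.rpow_mul (abs_nonneg (v i))]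
      congr 1; field_simp
    have e3 : 1 / (q/(q-2)) = (q-2)/q := by rw [one_div_div]
    have e4 : 1 / (q/2) = 2/q := by rw [one_div_div]
    rw [e1, e2, e3, e4] at H
    calc ∑ i, |x i| ^ (q - 2) * (v i * v i) = ∑ i, |x i| ^ (q-2) * |v i| ^ (2:ℝ) := by
          exact Finset.sum_congr rfl fun i _ => by rw [habs i]
      _ ≤ _ := H

open Finset

private noncomputable def Sl (d : ℕ) (q : ℝ) (z' u : Fin d → ℝ) (t : ℝ) : ℝ :=
  ∑ i, |z' i + t * u i| ^ q

private noncomputable def Al (d : ℕ) (q : ℝ) (z' u : Fin d → ℝ) (t : ℝ) : ℝ :=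
  ∑ i, Real.sign (z' i + t * u i) * (q * |z' i + t * u i| ^ (q - 1)) * u i

private noncomputable def Bl (d : ℕ) (q : ℝ) (z' u : Fin d → ℝ) (t : ℝ) : ℝ :=
  ∑ i, q * (q - 1) * |z' i + t * u i| ^ (q - 2) * u i * u i

private noncomputable def Pl (d : ℕ) (q : ℝ) (z' u : Fin d → ℝ) (t : ℝ) : ℝ :=
  2/q * Sl d q z' u t ^ (2/q - 1) * Al d q z' u t

private lemma Sl_nonneg (d : ℕ) (q : ℝ) (z' u : Fin d → ℝ) (t : ℝ) : 0 ≤ Sl d q z' u t :=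
  Finset.sum_nonneg fun i _ => Real.rpow_nonneg (abs_nonneg _) _

private lemma hasDerivAt_Sl {d : ℕ} {q : ℝ} (hq : 2 ≤ q) (z' u : Fin d → ℝ) (t : ℝ) :
    HasDerivAt (Sl d q z' u) (Al d q z' u t) t :=
  hasDerivAt_Sline hq z' u t

private lemma hasDerivAt_Al {d : ℕ} {q : ℝ} (hq : 2 ≤ q) (z' u : Fin d → ℝ) (t : ℝ) :
    HasDerivAt (Al d q z' u) (Bl d q z' u t) t :=
  hasDerivAt_Aline hq z' u t

private lemma hasDerivAt_phi {d : ℕ} {q : ℝ} (hq : 2 ≤ q) (z' u : Fin d → ℝ) {t : ℝ}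
    (hS : Sl d q z' u t ≠ 0) :
    HasDerivAt (fun t => Sl d q z' u t ^ (2/q)) (Pl d q z' u t) t := by
  exact (Real.hasDerivAt_rpow_const (p := 2/q) (Or.inl hS)).comp t (hasDerivAt_Sl hq z' u t)

private lemma hasDerivAt_Pl {d : ℕ} {q : ℝ} (hq : 2 ≤ q) (z' u : Fin d → ℝ) {t : ℝ}
    (hS : Sl d q z' u t ≠ 0) :
    HasDerivAt (Pl d q z' u)
      (2/q * ((2/q - 1) * Sl d q z' u t ^ (2/q - 1 - 1) * Al d q z' u t) * Al d q z' u t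
        + 2/q * Sl d q z' u t ^ (2/q - 1) * Bl d q z' u t) t := by
  have h1 : HasDerivAt (fun t => Sl d q z' u t ^ (2/q - 1))
      ((2/q - 1) * Sl d q z' u t ^ (2/q - 1 - 1) * Al d q z' u t) t :=
    (Real.hasDerivAt_rpow_const (p := 2/q - 1) (Or.inl hS)).comp t (hasDerivAt_Sl hq z' u t)
  exact (h1.const_mul (2/q)).mul (hasDerivAt_Al hq z' u t)

private lemma Pl_deriv_le {d : ℕ} {q : ℝ} (hq : 2 ≤ q) (z' u : Fin d → ℝ) {t : ℝ}
    (hS : 0 < Sl d q z' u t) :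
    2/q * ((2/q - 1) * Sl d q z' u t ^ (2/q - 1 - 1) * Al d q z' u t) * Al d q z' u t
        + 2/q * Sl d q z' u t ^ (2/q - 1) * Bl d q z' u t
      ≤ 2 * (q - 1) * (∑ i, |u i| ^ q) ^ (2/q) := by
  have hq0 : (0:ℝ) < q := by linarith
  set S := Sl d q z' u t with hSdef
  set A := Al d q z' u t with hAdef
  -- first term nonpositive
  have ht1 : 2/q * ((2/q - 1) * S ^ (2/q - 1 - 1) * A) * A ≤ 0 := by
    have h1 : 2/q - 1 ≤ 0 := by
      rw [sub_nonpos, div_le_one hq0]; linarith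
    have h2 : (0:ℝ) ≤ S ^ (2/q - 1 - 1) := Real.rpow_nonneg hS.le _
    have h3 : (0:ℝ) ≤ A * A := mul_self_nonneg A
    have h4 : (0:ℝ) < 2/q := by positivity
    calc 2/q * ((2/q - 1) * S ^ (2/q - 1 - 1) * A) * A
        = (2/q * (2/q - 1)) * (S ^ (2/q - 1 - 1) * (A * A)) := by ring
      _ ≤ 0 := mul_nonpos_of_nonpos_of_nonneg (by nlinarith) (mul_nonneg h2 h3)
  -- second term
  have ht2 : 2/q * S ^ (2/q - 1) * Bl d q z' u t ≤ 2 * (q - 1) * (∑ i, |u i| ^ q) ^ (2/q) := by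
    have hB : Bl d q z' u t ≤ q * (q-1) * (S ^ ((q-2)/q) * (∑ i, |u i| ^ q) ^ (2/q)) := by
      have h := holder_aux hq (fun i => z' i + t * u i) u
      have hBe : Bl d q z' u t = q * (q-1) * ∑ i, |z' i + t * u i| ^ (q - 2) * (u i * u i) := by
        unfold Bl; rw [Finset.mul_sum]; exact Finset.sum_congr rfl fun i _ => by ring
      rw [hBe]
      have hqq : (0:ℝ) ≤ q * (q - 1) := by nlinarith
      calc q * (q-1) * ∑ i, |z' i + t * u i| ^ (q - 2) * (u i * u i)
          ≤ q * (q-1) * ((∑ i, |z' i + t * u i| ^ q) ^ ((q-2)/q) * (∑ i, |u i| ^ q) ^ (2/q)) :=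
            mul_le_mul_of_nonneg_left h hqq
        _ = q * (q-1) * (S ^ ((q-2)/q) * (∑ i, |u i| ^ q) ^ (2/q)) := rfl
    have hcoef : (0:ℝ) ≤ 2/q * S ^ (2/q - 1) := by positivity
    calc 2/q * S ^ (2/q - 1) * Bl d q z' u t
        ≤ 2/q * S ^ (2/q - 1) * (q * (q-1) * (S ^ ((q-2)/q) * (∑ i, |u i| ^ q) ^ (2/q))) :=
          mul_le_mul_of_nonneg_left hB hcoef
      _ = 2 * (q - 1) * (S ^ (2/q - 1) * S ^ ((q-2)/q)) * (∑ i, |u i| ^ q) ^ (2/q) := by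
          field_simp
      _ = 2 * (q - 1) * (∑ i, |u i| ^ q) ^ (2/q) := by
          rw [← Real.rpow_add hS, show 2/q - 1 + (q-2)/q = 0 by field_simp; ring, Real.rpow_zero,
            mul_one]
  linarith

private lemma key_ineq {d : ℕ} {q : ℝ} (hq : 2 ≤ q) (z' u : Fin d → ℝ)
    (hS : ∀ t ∈ Set.Icc (0:ℝ) 1, 0 < Sl d q z' u t) :
    Sl d q z' u 1 ^ (2/q)
      ≤ Sl d q z' u 0 ^ (2/q) + Pl d q z' u 0 + (q-1) * (∑ i, |u i| ^ q) ^ (2/q) := by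
  set K := (∑ i, |u i| ^ q) ^ (2/q) with hK
  set χ : ℝ → ℝ := fun t => Pl d q z' u 0 + 2*(q-1)*K*t - Pl d q z' u t with hχdef
  have hχ : ∀ t : ℝ, Sl d q z' u t ≠ 0 → HasDerivAt χ
      (2*(q-1)*K - (2/q * ((2/q - 1) * Sl d q z' u t ^ (2/q - 1 - 1) * Al d q z' u t) * Al d q z' u t
        + 2/q * Sl d q z' u t ^ (2/q - 1) * Bl d q z' u t)) t := by
    intro t ht
    have hlin : HasDerivAt (fun t : ℝ => Pl d q z' u 0 + 2*(q-1)*K*t) (2*(q-1)*K) t := by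
      simpa using ((hasDerivAt_id t).const_mul (2*(q-1)*K)).const_add (Pl d q z' u 0)
    exact hlin.sub (hasDerivAt_Pl hq z' u ht)
  have hmonoχ : MonotoneOn χ (Set.Icc 0 1) := by
    apply monotoneOn_of_deriv_nonneg (convex_Icc 0 1)
    · intro t ht
      exact ((hχ t (hS t ht).ne').continuousAt).continuousWithinAt
    · rw [interior_Icc]
      intro t ht
      exact ((hχ t (hS t (Set.Ioo_subset_Icc_self ht)).ne').differentiableAt).differentiableWithinAt
    · rw [interior_Icc]
      intro t ht
      rw [(hχ t (hS t (Set.Ioo_subset_Icc_self ht)).ne').deriv]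
      rw [sub_nonneg]
      exact Pl_deriv_le hq z' u (hS t (Set.Ioo_subset_Icc_self ht))
  have hχ0 : χ 0 = 0 := by simp [hχdef]
  have hχnn : ∀ t ∈ Set.Icc (0:ℝ) 1, 0 ≤ χ t := by
    intro t ht
    have := hmonoχ (Set.left_mem_Icc.2 zero_le_one) ht ht.1
    rwa [hχ0] at this
  set ψ : ℝ → ℝ := fun t => Sl d q z' u 0 ^ (2/q) + Pl d q z' u 0 * t + (q-1)*K*t^2
      - Sl d q z' u t ^ (2/q) with hψdef
  have hψ : ∀ t : ℝ, Sl d q z' u t ≠ 0 → HasDerivAt ψ (χ t) t := by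
    intro t ht
    have hpoly : HasDerivAt (fun t : ℝ => Sl d q z' u 0 ^ (2/q) + Pl d q z' u 0 * t + (q-1)*K*t^2)
        (Pl d q z' u 0 + 2*(q-1)*K*t) t := by
      have h1 : HasDerivAt (fun t : ℝ => Pl d q z' u 0 * t) (Pl d q z' u 0) t := by
        simpa using (hasDerivAt_id t).const_mul (Pl d q z' u 0)
      have h2 : HasDerivAt (fun t : ℝ => (q-1)*K*t^2) ((q-1)*K*(2*t)) t := by
        simpa using (hasDerivAt_pow 2 t).const_mul ((q-1)*K)
      have h3 := (h1.add h2).const_add (Sl d q z' u 0 ^ (2/q))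
      convert h3 using 1
      · rfl
      · rfl
      · funext x; simp only [Pi.add_apply]; ring
      · ring
    have H := hpoly.sub (hasDerivAt_phi hq z' u ht)
    exact H
  have hmonoψ : MonotoneOn ψ (Set.Icc 0 1) := by
    apply monotoneOn_of_deriv_nonneg (convex_Icc 0 1)
    · intro t ht
      exact ((hψ t (hS t ht).ne').continuousAt).continuousWithinAt
    · rw [interior_Icc]
      intro t ht
      exact ((hψ t (hS t (Set.Ioo_subset_Icc_self ht)).ne').differentiableAt).differentiableWithinAt
    · rw [interior_Icc]
      intro t ht
      rw [(hψ t (hS t (Set.Ioo_subset_Icc_self ht)).ne').deriv]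
      exact hχnn t (Set.Ioo_subset_Icc_self ht)
  have hψ0 : ψ 0 = 0 := by simp [hψdef]
  have h1 : 0 ≤ ψ 1 := by
    have := hmonoψ (Set.left_mem_Icc.2 zero_le_one) (Set.right_mem_Icc.2 zero_le_one) zero_le_one
    rwa [hψ0] at this
  simp only [hψdef] at h1
  nlinarith [h1]

private lemma hasFDerivAt_G {d : ℕ} {q : ℝ} (hq : 2 ≤ q) (z' : Fin d → ℝ)
    (hS : (∑ i, |z' i| ^ q) ≠ 0) :
    HasFDerivAt (fun w : Fin d → ℝ => (∑ i, |w i| ^ q) ^ (2/q))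
      ((2/q * (∑ i, |z' i| ^ q) ^ (2/q - 1)) •
        (∑ i, (Real.sign (z' i) * (q * |z' i| ^ (q - 1))) •
          (ContinuousLinearMap.proj i : (Fin d → ℝ) →L[ℝ] ℝ))) z' := by
  have hsum : HasFDerivAt (fun w : Fin d → ℝ => ∑ i, |w i| ^ q)
      (∑ i, (Real.sign (z' i) * (q * |z' i| ^ (q - 1))) •
        (ContinuousLinearMap.proj i : (Fin d → ℝ) →L[ℝ] ℝ)) z' := by
    apply HasFDerivAt.fun_sum
    intro i _
    have hproj : HasFDerivAt (fun w : Fin d → ℝ => w i)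
        (ContinuousLinearMap.proj i : (Fin d → ℝ) →L[ℝ] ℝ) z' :=
      (ContinuousLinearMap.proj i : (Fin d → ℝ) →L[ℝ] ℝ).hasFDerivAt
    exact (myHasDerivAt_abs_rpow (by linarith) (z' i)).comp_hasFDerivAt z' hproj
  exact (Real.hasDerivAt_rpow_const (p := 2/q) (Or.inl hS)).comp_hasFDerivAt z' hsum

private lemma fderiv_G_apply {d : ℕ} {q : ℝ} (hq : 2 ≤ q) (z' : Fin d → ℝ)
    (hS : (∑ i, |z' i| ^ q) ≠ 0) (v : Fin d → ℝ) :
    fderiv ℝ (fun w : Fin d → ℝ => (∑ i, |w i| ^ q) ^ (2/q)) z' v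
      = 2/q * (∑ i, |z' i| ^ q) ^ (2/q - 1)
          * ∑ i, Real.sign (z' i) * (q * |z' i| ^ (q - 1)) * v i := by
  rw [(hasFDerivAt_G hq z' hS).fderiv]
  simp only [ContinuousLinearMap.smul_apply, ContinuousLinearMap.coe_sum', Finset.sum_apply,
    ContinuousLinearMap.proj_apply, smul_eq_mul, ContinuousLinearMap.coe_smul', Pi.smul_apply]

private lemma sq_rpow {q : ℝ} (hq : 2 ≤ q) {S : ℝ} (hS : 0 ≤ S) :
    (S ^ (1/q)) ^ (2:ℕ) = S ^ (2/q) := by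
  rw [← Real.rpow_natCast (S ^ (1/q)) 2, ← Real.rpow_mul hS]
  congr 1
  push_cast
  ring

private lemma hasFDerivAt_G_zero {d : ℕ} {q : ℝ} (hq : 2 ≤ q) :
    HasFDerivAt (fun w : Fin d → ℝ => (∑ i, |w i| ^ q) ^ (2/q))
      (0 : (Fin d → ℝ) →L[ℝ] ℝ) 0 := by
  have hq0 : (0:ℝ) < q := by linarith
  rw [hasFDerivAt_iff_isLittleO_nhds_zero]
  have hf0 : (∑ i, |(0 : Fin d → ℝ) i| ^ q) ^ (2/q) = 0 := by
    simp [Real.zero_rpow hq0.ne', Real.zero_rpow (by positivity : 2/q ≠ 0)]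
  set D := (d:ℝ) ^ (2/q) with hD
  have hD0 : 0 ≤ D := Real.rpow_nonneg (Nat.cast_nonneg d) _
  have hbound : ∀ h : Fin d → ℝ, (∑ i, |h i| ^ q) ^ (2/q) ≤ D * (‖h‖ * ‖h‖) := by
    intro h
    have h1 : ∀ i : Fin d, |h i| ^ q ≤ ‖h‖ ^ q := fun i =>
      Real.rpow_le_rpow (abs_nonneg _) (norm_le_pi_norm h i) hq0.le
    have h2 : (∑ i, |h i| ^ q) ≤ (d:ℝ) * ‖h‖ ^ q := by
      calc (∑ i, |h i| ^ q) ≤ ∑ _i : Fin d, ‖h‖ ^ q := Finset.sum_le_sum fun i _ => h1 i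
        _ = (d:ℝ) * ‖h‖ ^ q := by
          rw [Finset.sum_const, Finset.card_univ, Fintype.card_fin, nsmul_eq_mul]
    calc (∑ i, |h i| ^ q) ^ (2/q) ≤ ((d:ℝ) * ‖h‖ ^ q) ^ (2/q) :=
          Real.rpow_le_rpow (Finset.sum_nonneg fun i _ => Real.rpow_nonneg (abs_nonneg _) _)
            h2 (by positivity)
      _ = D * (‖h‖ ^ q) ^ (2/q) :=
          Real.mul_rpow (Nat.cast_nonneg d) (Real.rpow_nonneg (norm_nonneg _) _)
      _ = D * (‖h‖ * ‖h‖) := by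
          rw [← Real.rpow_mul (norm_nonneg _), show q * (2/q) = 2 by field_simp]
          rw [show (2:ℝ) = ((2:ℕ):ℝ) by norm_num, Real.rpow_natCast, sq]
  rw [Asymptotics.isLittleO_iff]
  intro c hc
  rw [Metric.eventually_nhds_iff]
  refine ⟨c / (D + 1), by positivity, fun {h} hdist => ?_⟩
  have hnorm : ‖h‖ < c / (D + 1) := by simpa [dist_eq_norm] using hdist
  simp only [zero_add, hf0, sub_zero, ContinuousLinearMap.zero_apply]
  have hGnn : 0 ≤ (∑ i, |h i| ^ q) ^ (2/q) :=
    Real.rpow_nonneg (Finset.sum_nonneg fun i _ => Real.rpow_nonneg (abs_nonneg _) _) _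
  rw [Real.norm_eq_abs, abs_of_nonneg hGnn]
  have e1 : D * ‖h‖ ≤ D * (c/(D+1)) := mul_le_mul_of_nonneg_left hnorm.le hD0
  have e2 : D * (c/(D+1)) ≤ c := by
    have hle : D/(D+1) ≤ 1 := by
      rw [div_le_one (by positivity)]; linarith
    calc D * (c/(D+1)) = c * (D/(D+1)) := by ring
      _ ≤ c * 1 := mul_le_mul_of_nonneg_left hle hc.le
      _ = c := mul_one c
  calc (∑ i, |h i| ^ q) ^ (2/q) ≤ D * (‖h‖ * ‖h‖) := hbound h
    _ = (D * ‖h‖) * ‖h‖ := by ring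
    _ ≤ c * ‖h‖ := mul_le_mul_of_nonneg_right (e1.trans e2) (norm_nonneg h)
  

/-- For `2 ≤ q < ∞`, the squared `ℓ_q` norm `G(z) = ‖z‖_q²` on `ℝ^d` is
`(2(q−1), 2)`-uniformly smooth:
`‖z‖_q² ≤ ‖z'‖_q² + ⟨∇G(z'), z − z'⟩ + (q−1)‖z − z'‖_q²`. -/
theorem stmt_4 (d : ℕ) (q : ℝ) (hq : 2 ≤ q) :
    ∀ z z' : Fin d → ℝ,
      (∑ i, |z i| ^ q) ^ (2 / q)
        ≤ (∑ i, |z' i| ^ q) ^ (2 / q)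
          + fderiv ℝ (fun w : Fin d → ℝ => (∑ i, |w i| ^ q) ^ (2 / q)) z' (z - z')
          + (q - 1) * ((∑ i, |(z - z') i| ^ q) ^ (1 / q)) ^ 2 := by
  intro z z'
  have hq0 : (0:ℝ) < q := by linarith
  set u : Fin d → ℝ := fun i => z i - z' i with hu
  have hzz' : (z - z') = u := by funext i; simp [hu]
  have hSznn : (0:ℝ) ≤ ∑ i, |z i| ^ q :=
    Finset.sum_nonneg fun i _ => Real.rpow_nonneg (abs_nonneg _) _
  have hSunn : (0:ℝ) ≤ ∑ i, |u i| ^ q :=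
    Finset.sum_nonneg fun i _ => Real.rpow_nonneg (abs_nonneg _) _
  have hKeq : ((∑ i, |(z - z') i| ^ q) ^ (1/q)) ^ 2 = (∑ i, |u i| ^ q) ^ (2/q) := by
    rw [hzz']
    exact sq_rpow hq hSunn
  rcases eq_or_ne (∑ i, |z' i| ^ q) 0 with hS0 | hS0
  · -- z' = 0
    have hz' : z' = 0 := by
      funext i
      have h1 : ∀ j ∈ Finset.univ, (0:ℝ) ≤ |z' j| ^ q :=
        fun j _ => Real.rpow_nonneg (abs_nonneg _) _
      have h2 := (Finset.sum_eq_zero_iff_of_nonneg h1).1 hS0 i (Finset.mem_univ i)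
      have h3 : |z' i| = 0 := by
        by_contra hne
        exact hne ((Real.rpow_eq_zero (abs_nonneg _) hq0.ne').1 h2)
      simpa using abs_eq_zero.1 h3
    subst hz'
    rw [(hasFDerivAt_G_zero hq).fderiv]
    simp only [ContinuousLinearMap.zero_apply, add_zero]
    rw [hKeq]
    have h0 : (∑ i, |(0 : Fin d → ℝ) i| ^ q) ^ (2/q) = 0 := by
      simp [Real.zero_rpow hq0.ne', Real.zero_rpow (by positivity : 2/q ≠ 0)]
    rw [h0, zero_add]
    have hzu : ∀ i, z i = u i := fun i => by simp [hu]
    have hSeq : (∑ i, |z i| ^ q) = ∑ i, |u i| ^ q :=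
      Finset.sum_congr rfl fun i _ => by rw [hzu i]
    rw [hSeq]
    exact le_mul_of_one_le_left (Real.rpow_nonneg hSunn _) (by linarith)
  · have hS0pos : 0 < ∑ i, |z' i| ^ q :=
      lt_of_le_of_ne (Finset.sum_nonneg fun i _ => Real.rpow_nonneg (abs_nonneg _) _) (Ne.symm hS0)
    rw [fderiv_G_apply hq z' hS0 (z - z'), hKeq]
    by_cases hhit : ∃ t ∈ Set.Ioc (0:ℝ) 1, ∀ i, z' i + t * u i = 0
    · -- the segment passes through the origin: everything is collinear
      obtain ⟨t₀, ht₀, hX⟩ := hhit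
      have ht0pos : 0 < t₀ := ht₀.1
      have ht0le : t₀ ≤ 1 := ht₀.2
      have hz'i : ∀ i, z' i = -(t₀ * u i) := fun i => by linarith [hX i]
      have hzi : ∀ i, z i = (1 - t₀) * u i := by
        intro i
        have : u i = z i - z' i := rfl
        have h2 := hz'i i
        nlinarith [hz'i i]
      set Su := ∑ i, |u i| ^ q with hSu
      have hSz' : (∑ i, |z' i| ^ q) = t₀ ^ q * Su := by
        rw [hSu, Finset.mul_sum]
        refine Finset.sum_congr rfl fun i _ => ?_
        rw [hz'i i, abs_neg, abs_mul, abs_of_pos ht0pos,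
          Real.mul_rpow ht0pos.le (abs_nonneg _)]
      have hSupos : 0 < Su := by
        rcases mul_pos_iff.1 (hSz' ▸ hS0pos) with ⟨_, h⟩ | ⟨h, _⟩
        · exact h
        · exact absurd (Real.rpow_pos_of_pos ht0pos q) (not_lt.2 h.le)
      have hSz : (∑ i, |z i| ^ q) = (1 - t₀) ^ q * Su := by
        rw [hSu, Finset.mul_sum]
        refine Finset.sum_congr rfl fun i _ => ?_
        rw [hzi i, abs_mul, abs_of_nonneg (by linarith : (0:ℝ) ≤ 1 - t₀),
          Real.mul_rpow (by linarith : (0:ℝ) ≤ 1 - t₀) (abs_nonneg _)]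
      set K := Su ^ (2/q) with hK
      have hKnn : 0 ≤ K := Real.rpow_nonneg hSupos.le _
      -- LHS
      have hLHS : (∑ i, |z i| ^ q) ^ (2/q) = (1 - t₀) ^ (2:ℝ) * K := by
        rw [hSz, Real.mul_rpow (Real.rpow_nonneg (by linarith) _) hSupos.le,
          ← Real.rpow_mul (by linarith : (0:ℝ) ≤ 1 - t₀), show q * (2/q) = 2 by field_simp]
      have hRHS1 : (∑ i, |z' i| ^ q) ^ (2/q) = t₀ ^ (2:ℝ) * K := by
        rw [hSz', Real.mul_rpow (Real.rpow_nonneg ht0pos.le _) hSupos.le,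
          ← Real.rpow_mul ht0pos.le, show q * (2/q) = 2 by field_simp]
      -- the inner-product sum
      have hv : (∑ i, Real.sign (z' i) * (q * |z' i| ^ (q - 1)) * ((z - z') i))
          = -(q * t₀ ^ (q-1) * Su) := by
        rw [hSu, show -(q * t₀ ^ (q-1) * ∑ i, |u i| ^ q) = ∑ i, -(q * t₀ ^ (q-1) * |u i| ^ q) by
          rw [Finset.mul_sum, ← Finset.sum_neg_distrib]]
        refine Finset.sum_congr rfl fun i _ => ?_
        have hzz'i : (z - z') i = u i := by rw [hzz']
        rw [hzz'i, hz'i i]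
        rcases lt_trichotomy (u i) 0 with hui | hui | hui
        · have hpos : 0 < -(t₀ * u i) := by nlinarith
          rw [Real.sign_of_pos hpos, abs_of_pos hpos]
          have h1 : -(t₀ * u i) = t₀ * (-(u i)) := by ring
          rw [h1, Real.mul_rpow ht0pos.le (by linarith : (0:ℝ) ≤ -(u i))]
          have h2 : |u i| = -(u i) := abs_of_neg hui
          rw [h2]
          have h3 : (-(u i)) ^ q = (-(u i)) ^ (q-1) * (-(u i)) := by
            rw [← Real.rpow_add_one (by linarith : -(u i) ≠ 0), sub_add_cancel]
          rw [h3]; ring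
        · rw [hui]
          simp [Real.zero_rpow hq0.ne']
        · have hneg : -(t₀ * u i) < 0 := by nlinarith
          rw [Real.sign_of_neg hneg, abs_of_neg hneg, neg_neg]
          rw [Real.mul_rpow ht0pos.le hui.le, abs_of_pos hui]
          have h3 : (u i) ^ q = (u i) ^ (q-1) * (u i) := by
            rw [← Real.rpow_add_one (ne_of_gt hui), sub_add_cancel]
          rw [h3]; ring
      rw [hv]
      -- compute the middle term
      have hmid : 2/q * (t₀ ^ q * Su) ^ (2/q - 1) * -(q * t₀ ^ (q-1) * Su) = -(2 * t₀ * K) := by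
        rw [Real.mul_rpow (Real.rpow_nonneg ht0pos.le _) hSupos.le,
          ← Real.rpow_mul ht0pos.le]
        have e2 : t₀ ^ (q * (2/q - 1)) * t₀ ^ (q-1) = t₀ := by
          rw [← Real.rpow_add ht0pos, show q * (2/q - 1) + (q-1) = 1 by field_simp; ring,
            Real.rpow_one]
        have e3 : Su ^ (2/q - 1) * Su = K := by
          rw [hK, ← Real.rpow_add_one hSupos.ne', sub_add_cancel]
        calc 2/q * (t₀ ^ (q * (2/q - 1)) * Su ^ (2/q - 1)) * -(q * t₀ ^ (q-1) * Su)
            = -((2/q * q) * ((t₀ ^ (q * (2/q - 1)) * t₀ ^ (q-1)) * (Su ^ (2/q - 1) * Su))) := by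
              ring
          _ = -(2 * t₀ * K) := by
              rw [e2, e3, show 2/q * q = 2 by field_simp]
              ring
      have hmid' : 2/q * (∑ i, |z' i| ^ q) ^ (2/q - 1) * -(q * t₀ ^ (q-1) * Su)
          = -(2 * t₀ * K) := by
        rw [hSz']; exact hmid
      rw [hmid', hLHS, hRHS1]
      have h2e : ∀ x : ℝ, 0 ≤ x → x ^ (2:ℝ) = x * x := by
        intro x hx
        rw [show (2:ℝ) = ((2:ℕ):ℝ) by norm_num, Real.rpow_natCast, sq]
      rw [h2e _ (by linarith : (0:ℝ) ≤ 1 - t₀), h2e _ ht0pos.le]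
      nlinarith [mul_nonneg (by linarith : (0:ℝ) ≤ q - 2) hKnn]
    · -- main case: the segment avoids the origin
      have hSpos : ∀ t ∈ Set.Icc (0:ℝ) 1, 0 < Sl d q z' u t := by
        intro t ht
        rcases eq_or_lt_of_le ht.1 with rfl | htpos
        · have : Sl d q z' u 0 = ∑ i, |z' i| ^ q := by
            unfold Sl; exact Finset.sum_congr rfl fun i _ => by norm_num
          rw [this]; exact hS0pos
        · rcases eq_or_ne (Sl d q z' u t) 0 with hzero | hne
          · exfalso
            apply hhit
            refine ⟨t, ⟨htpos, ht.2⟩, fun i => ?_⟩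
            have h1 : ∀ j ∈ Finset.univ, (0:ℝ) ≤ |z' j + t * u j| ^ q :=
              fun j _ => Real.rpow_nonneg (abs_nonneg _) _
            have h2 := (Finset.sum_eq_zero_iff_of_nonneg h1).1 hzero i (Finset.mem_univ i)
            have h3 : |z' i + t * u i| = 0 := by
              by_contra hne2
              exact hne2 ((Real.rpow_eq_zero (abs_nonneg _) hq0.ne').1 h2)
            exact abs_eq_zero.1 h3
          · exact lt_of_le_of_ne (Sl_nonneg d q z' u t) (Ne.symm hne)
      have key := key_ineq hq z' u hSpos
      have hSl1 : Sl d q z' u 1 = ∑ i, |z i| ^ q := by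
        unfold Sl
        refine Finset.sum_congr rfl fun i _ => ?_
        rw [show z' i + 1 * u i = z i by simp [hu]]
      have hSl0 : Sl d q z' u 0 = ∑ i, |z' i| ^ q := by
        unfold Sl; exact Finset.sum_congr rfl fun i _ => by norm_num
      have hPl0 : Pl d q z' u 0 = 2/q * (∑ i, |z' i| ^ q) ^ (2/q - 1)
          * ∑ i, Real.sign (z' i) * (q * |z' i| ^ (q - 1)) * ((z - z') i) := by
        unfold Pl Al
        rw [hSl0]
        congr 1
        refine Finset.sum_congr rfl fun i _ => ?_
        rw [show z' i + 0 * u i = z' i by ring, show (z - z') i = u i by rw [hzz']]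
      rw [hSl1, hSl0, hPl0] at key
      exact key
end

section
/- Let F : ℝ^T → ℝ be (σ,p)-uniformly smooth in each of its T arguments with respect to a norm ‖·‖ on a space H, with F(0,...,0) = 0. Then for all z_1,...,z_T ∈ H, F(z_1,...,z_T) ≤ Σ_{t=1}^T ⟨∇_t F(z_1,...,z_{t-1},0,...,0), z_t⟩ + (σ/p) Σ_{t=1}^T ‖z_t‖^p, where ∇_t denotes the gradient in the t-th argument. -/
/-- If `F : H^T → ℝ` is `(σ,p)`-uniformly smooth in each of its arguments
(with partial gradients `D`) and `F(0,…,0) = 0`, then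
`F(z₁,…,z_T) ≤ ∑ₜ ⟨∇ₜF(z₁,…,z_{t−1},0,…,0), zₜ⟩ + (σ/p) ∑ₜ ‖zₜ‖^p`. -/
theorem stmt_5 {H : Type*} [NormedAddCommGroup H] [NormedSpace ℝ H]
    (T : ℕ) (p σ : ℝ) (hp : 1 < p) (hp2 : p ≤ 2) (hσ : 0 ≤ σ)
    (F : (Fin T → H) → ℝ) (D : (Fin T → H) → Fin T → (H →L[ℝ] ℝ))
    (hF0 : F (fun _ => 0) = 0)
    (hsmooth : ∀ (z : Fin T → H) (t : Fin T) (a b : H),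
      F (Function.update z t a) ≤ F (Function.update z t b)
        + D (Function.update z t b) t (a - b) + σ / p * ‖a - b‖ ^ p) :
    ∀ z : Fin T → H,
      F z ≤ (∑ t : Fin T, D (fun s => if (s : ℕ) < (t : ℕ) then z s else 0) t (z t))
        + σ / p * ∑ t, ‖z t‖ ^ p := by
  intro z
  set w : ℕ → (Fin T → H) := fun k s => if (s : ℕ) < k then z s else 0 with hw
  have key : ∀ k, k ≤ T → F (w k) ≤ ∑ t : Fin T,
      (if (t : ℕ) < k then D (w (t : ℕ)) t (z t) + σ / p * ‖z t‖ ^ p else 0) := by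
    intro k
    induction k with
    | zero =>
      intro _
      have : w 0 = fun _ => 0 := by
        funext s; simp [hw]
      simp [this, hF0]
    | succ k ih =>
      intro hkT
      have hk : k < T := hkT
      set t : Fin T := ⟨k, hk⟩ with ht
      have h1 : w (k + 1) = Function.update (w k) t (z t) := by
        funext s
        by_cases hs : s = t
        · subst hs
          simp [hw, Function.update_self, ht]
        · have hst : (s : ℕ) ≠ k := fun h => hs (Fin.ext h)
          have : ((s : ℕ) < k + 1) ↔ ((s : ℕ) < k) := by omega
          simp [hw, Function.update_of_ne hs, this]
      have h2 : w k = Function.update (w k) t 0 := by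
        funext s
        by_cases hs : s = t
        · subst hs; simp [hw, Function.update_self, ht]
        · simp [Function.update_of_ne hs]
      have hstep := hsmooth (w k) t (z t) 0
      rw [← h1, ← h2] at hstep
      simp only [sub_zero] at hstep
      have hsum : ∀ t' : Fin T,
          (if (t' : ℕ) < k + 1 then D (w (t' : ℕ)) t' (z t') + σ / p * ‖z t'‖ ^ p else 0)
          = (if (t' : ℕ) < k then D (w (t' : ℕ)) t' (z t') + σ / p * ‖z t'‖ ^ p else 0)
          + (if t' = t then D (w k) t (z t) + σ / p * ‖z t‖ ^ p else 0) := by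
        intro t'
        by_cases hs : t' = t
        · subst hs; simp [ht]
        · have hst : (t' : ℕ) ≠ k := fun h => hs (Fin.ext h)
          have : ((t' : ℕ) < k + 1) ↔ ((t' : ℕ) < k) := by omega
          simp [hs, this]
      calc F (w (k + 1)) ≤ F (w k) + D (w k) t (z t) + σ / p * ‖z t‖ ^ p := hstep
        _ ≤ (∑ t' : Fin T, (if (t' : ℕ) < k then D (w (t' : ℕ)) t' (z t')
              + σ / p * ‖z t'‖ ^ p else 0)) + (D (w k) t (z t) + σ / p * ‖z t‖ ^ p) := by
            have := ih (le_of_lt hk)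
            linarith
        _ = ∑ t' : Fin T, (if (t' : ℕ) < k + 1 then D (w (t' : ℕ)) t' (z t')
              + σ / p * ‖z t'‖ ^ p else 0) := by
            rw [Finset.sum_congr rfl (fun t' _ => hsum t'), Finset.sum_add_distrib,
              Finset.sum_ite_eq' Finset.univ t]
            simp
  have hT := key T le_rfl
  have hwT : w T = z := by
    funext s; simp [hw, s.isLt]
  rw [hwT] at hT
  calc F z ≤ ∑ t : Fin T,
      (if (t : ℕ) < T then D (w (t : ℕ)) t (z t) + σ / p * ‖z t‖ ^ p else 0) := hT
    _ = (∑ t : Fin T, D (fun s => if (s : ℕ) < (t : ℕ) then z s else 0) t (z t))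
        + σ / p * ∑ t, ‖z t‖ ^ p := by
      rw [Finset.mul_sum, ← Finset.sum_add_distrib]
      refine Finset.sum_congr rfl fun t _ => ?_
      simp [t.isLt, hw]
end

section
/- Let (B,‖·‖) be a Banach space such that ‖·‖^p / p is (γ,p)-uniformly smooth for some 1 < p ≤ 2, and let z be a B-valued tree of depth T with ‖z_t(ε)‖ ≤ R for all t, ε. Then for i.i.d. Rademacher ε_1,...,ε_T, E[‖(1/T) Σ_{t=1}^T ε_t z_t(ε)‖] ≤ γ^{1/p} R / T^{1−1/p}. -/
/-- In a `(γ,p)`-smooth Banach space (i.e. `‖·‖^p/p` is `(γ,p)`-uniformly smooth,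
witnessed by gradients `D`), for a `B`-valued tree `z` of depth `T` with
`‖z_t(ε)‖ ≤ R` and i.i.d. Rademacher signs,
`E‖(1/T) ∑ₜ εₜ zₜ(ε)‖ ≤ γ^{1/p} R / T^{1−1/p}`. -/
theorem stmt_15 {B : Type*} [NormedAddCommGroup B] [NormedSpace ℝ B]
    (T : ℕ) (p γ R : ℝ) (hp : 1 < p) (hp2 : p ≤ 2) (hγ : 0 ≤ γ) (hR : 0 ≤ R)
    (D : B → (B →L[ℝ] ℝ))
    (hsmooth : ∀ x y : B, ‖x‖ ^ p / p ≤ ‖y‖ ^ p / p + D y (x - y) + γ / p * ‖x - y‖ ^ p)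
    (z : Fin T → (Fin T → Bool) → B)
    (htree : ∀ (t : Fin T) (ε ε' : Fin T → Bool),
      (∀ s : Fin T, s < t → ε s = ε' s) → z t ε = z t ε')
    (hbd : ∀ t ε, ‖z t ε‖ ≤ R) :
    (∑ ε : Fin T → Bool, ‖(T : ℝ)⁻¹ • ∑ t, (if ε t then (1:ℝ) else -1) • z t ε‖) / 2 ^ T
      ≤ γ ^ (1 / p) * R / (T : ℝ) ^ (1 - 1 / p) := by
  have hp0 : (0:ℝ) < p := by linarith
  rcases Nat.eq_zero_or_pos T with hT | hT
  · subst hT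
    simp
    positivity
  -- F k ε : partial signed sum over t < k
  set F : ℕ → (Fin T → Bool) → B := fun k ε =>
    ∑ t ∈ Finset.univ.filter (fun t : Fin T => (t : ℕ) < k),
      (if ε t then (1:ℝ) else -1) • z t ε with hF
  -- step inequality
  have hstep : ∀ k, k < T →
      ∑ ε : Fin T → Bool, ‖F (k+1) ε‖ ^ p ≤
        (∑ ε : Fin T → Bool, ‖F k ε‖ ^ p) + γ * R ^ p * 2 ^ T := by
    intro k hk
    obtain ⟨j, hj⟩ : ∃ j : Fin T, (j : ℕ) = k := ⟨⟨k, hk⟩, rfl⟩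
    have hsplit : ∀ ε, F (k+1) ε = F k ε + (if ε j then (1:ℝ) else -1) • z j ε := by
      intro ε
      have hins : (Finset.univ.filter (fun t : Fin T => (t : ℕ) < k+1))
          = insert j (Finset.univ.filter (fun t : Fin T => (t : ℕ) < k)) := by
        ext t
        simp only [Finset.mem_filter, Finset.mem_univ, true_and, Finset.mem_insert,
          Fin.ext_iff, hj]
        omega
      have hjn : j ∉ Finset.univ.filter (fun t : Fin T => (t : ℕ) < k) := by
        simp [hj]
      simp only [hF, hins, Finset.sum_insert hjn]
      ring_nf
      abel
    -- the flip involution at coordinate j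
    set e : (Fin T → Bool) → (Fin T → Bool) := fun ε => Function.update ε j (!ε j) with he
    have hinvol : Function.Involutive e := by
      intro ε
      funext s
      by_cases hs : s = j
      · subst hs; simp [he]
      · simp [he, Function.update_of_ne hs]
    have hFe : ∀ ε, F k (e ε) = F k ε := by
      intro ε
      refine Finset.sum_congr rfl fun t ht => ?_
      simp only [Finset.mem_filter, Finset.mem_univ, true_and] at ht
      have htj : t ≠ j := by
        intro h; subst h; omega
      have h1 : e ε t = ε t := Function.update_of_ne htj _ _
      have h2 : z t (e ε) = z t ε := by
        refine htree t _ _ fun s hs => ?_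
        have : s ≠ j := by
          intro h; subst h
          have := Fin.lt_iff_val_lt_val.mp hs
          omega
        exact Function.update_of_ne this _ _
      rw [h1, h2]
    have hze : ∀ ε, z j (e ε) = z j ε := by
      intro ε
      refine htree j _ _ fun s hs => ?_
      have : s ≠ j := ne_of_lt hs
      exact Function.update_of_ne this _ _
    -- cancellation of the linear term
    set g : (Fin T → Bool) → ℝ := fun ε => D (F k ε) ((if ε j then (1:ℝ) else -1) • z j ε)
      with hg
    have hcancel : ∑ ε : Fin T → Bool, g ε = 0 := by
      have hcomp : ∑ ε : Fin T → Bool, g (e ε) = ∑ ε : Fin T → Bool, g ε :=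
        Function.Bijective.sum_comp hinvol.bijective g
      have hneg : ∀ ε, g (e ε) = - g ε := by
        intro ε
        have hjj : e ε j = !ε j := Function.update_self _ _ _
        have : (if (!ε j) then (1:ℝ) else -1) = -(if ε j then (1:ℝ) else -1) := by
          cases ε j <;> simp
        simp only [hg, hFe, hze, hjj, this, neg_smul, map_neg]
      rw [Finset.sum_congr rfl fun ε _ => hneg ε, Finset.sum_neg_distrib] at hcomp
      linarith
    -- per-ε smoothness
    have hptw : ∀ ε : Fin T → Bool,
        ‖F (k+1) ε‖ ^ p ≤ ‖F k ε‖ ^ p + p * g ε + γ * ‖z j ε‖ ^ p := by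
      intro ε
      have := hsmooth (F (k+1) ε) (F k ε)
      rw [hsplit ε] at this
      have hsub : F k ε + (if ε j then (1:ℝ) else -1) • z j ε - F k ε
          = (if ε j then (1:ℝ) else -1) • z j ε := by abel
      rw [hsub] at this
      have hnorm : ‖(if ε j then (1:ℝ) else -1) • z j ε‖ = ‖z j ε‖ := by
        rw [norm_smul]
        cases ε j <;> simp
      rw [hnorm] at this
      have h1 : ‖F k ε + (if ε j then (1:ℝ) else -1) • z j ε‖ ^ p / p
          ≤ ‖F k ε‖ ^ p / p + g ε + γ / p * ‖z j ε‖ ^ p := this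
      have h2 := mul_le_mul_of_nonneg_left h1 hp0.le
      rw [← hsplit ε] at h2
      field_simp at h2
      nlinarith [h2]
    calc ∑ ε : Fin T → Bool, ‖F (k+1) ε‖ ^ p
        ≤ ∑ ε : Fin T → Bool, (‖F k ε‖ ^ p + p * g ε + γ * ‖z j ε‖ ^ p) :=
          Finset.sum_le_sum fun ε _ => hptw ε
      _ = (∑ ε : Fin T → Bool, ‖F k ε‖ ^ p) + p * (∑ ε : Fin T → Bool, g ε)
            + γ * ∑ ε : Fin T → Bool, ‖z j ε‖ ^ p := by
          rw [Finset.sum_add_distrib, Finset.sum_add_distrib, Finset.mul_sum, Finset.mul_sum]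
      _ ≤ (∑ ε : Fin T → Bool, ‖F k ε‖ ^ p) + γ * R ^ p * 2 ^ T := by
          rw [hcancel, mul_zero, add_zero]
          have hzb : ∀ ε : Fin T → Bool, ‖z j ε‖ ^ p ≤ R ^ p := fun ε =>
            Real.rpow_le_rpow (norm_nonneg _) (hbd j ε) hp0.le
          have : ∑ ε : Fin T → Bool, ‖z j ε‖ ^ p ≤ ∑ _ε : Fin T → Bool, R ^ p :=
            Finset.sum_le_sum fun ε _ => hzb ε
          simp only [Finset.sum_const, Finset.card_univ, Fintype.card_fun,
            Fintype.card_bool, Fintype.card_fin, nsmul_eq_mul] at this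
          push_cast at this
          have h2 := mul_le_mul_of_nonneg_left this hγ
          nlinarith [h2]
  -- main induction
  have key : ∀ k, k ≤ T →
      ∑ ε : Fin T → Bool, ‖F k ε‖ ^ p ≤ γ * k * R ^ p * 2 ^ T := by
    intro k
    induction k with
    | zero =>
      intro _
      have : ∀ ε : Fin T → Bool, F 0 ε = 0 := by
        intro ε; simp [hF]
      simp only [this, norm_zero, Real.zero_rpow (ne_of_gt hp0)]
      simp
    | succ n ih =>
      intro hn
      have h1 := hstep n (by omega)
      have h2 := ih (by omega)
      push_cast
      nlinarith [h1, h2]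
  have total := key T le_rfl
  have hFT : ∀ ε : Fin T → Bool, F T ε = ∑ t, (if ε t then (1:ℝ) else -1) • z t ε := by
    intro ε
    simp only [hF]
    congr 1
    simp [Finset.filter_true_of_mem, Fin.is_lt]
  -- Jensen step
  have hN : (0:ℝ) < 2 ^ T := by positivity
  set N : ℝ := 2 ^ T with hNdef
  have hJ : (∑ ε : Fin T → Bool, ‖F T ε‖) / N ≤ (γ * T * R ^ p) ^ (1/p) := by
    have hw : ∀ ε ∈ (Finset.univ : Finset (Fin T → Bool)), (0:ℝ) ≤ N⁻¹ := by
      intro _ _; positivity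
    have hw' : ∑ _ε : Fin T → Bool, (N:ℝ)⁻¹ = 1 := by
      simp only [Finset.sum_const, Finset.card_univ, Fintype.card_fun, Fintype.card_bool,
        Fintype.card_fin, nsmul_eq_mul, hNdef]
      push_cast
      field_simp
    have hz0 : ∀ ε ∈ (Finset.univ : Finset (Fin T → Bool)), (0:ℝ) ≤ ‖F T ε‖ :=
      fun ε _ => norm_nonneg _
    have hjen := Real.arith_mean_le_rpow_mean Finset.univ (fun _ => N⁻¹)
      (fun ε => ‖F T ε‖) hw hw' hz0 hp.le
    have hsum1 : ∑ ε : Fin T → Bool, N⁻¹ * ‖F T ε‖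
        = (∑ ε : Fin T → Bool, ‖F T ε‖) / N := by
      rw [← Finset.mul_sum]; ring
    have hsum2 : ∑ ε : Fin T → Bool, N⁻¹ * ‖F T ε‖ ^ p
        = (∑ ε : Fin T → Bool, ‖F T ε‖ ^ p) / N := by
      rw [← Finset.mul_sum]; ring
    rw [hsum1, hsum2] at hjen
    refine hjen.trans ?_
    have hle : (∑ ε : Fin T → Bool, ‖F T ε‖ ^ p) / N ≤ γ * T * R ^ p := by
      rw [div_le_iff₀ hN]
      calc ∑ ε : Fin T → Bool, ‖F T ε‖ ^ p ≤ γ * T * R ^ p * 2 ^ T := total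
        _ = γ * T * R ^ p * N := by rw [hNdef]
    refine Real.rpow_le_rpow ?_ hle (by positivity)
    have : (0:ℝ) ≤ ∑ ε : Fin T → Bool, ‖F T ε‖ ^ p :=
      Finset.sum_nonneg fun ε _ => Real.rpow_nonneg (norm_nonneg _) _
    positivity
  -- unfold RHS
  have hTpos : (0:ℝ) < (T:ℝ) := by exact_mod_cast hT
  have hrhs : γ ^ (1/p) * R / (T:ℝ) ^ (1 - 1/p)
      = (T:ℝ)⁻¹ * (γ ^ (1/p) * (T:ℝ) ^ (1/p) * R) := by
    rw [Real.rpow_sub hTpos, Real.rpow_one]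
    field_simp
  have hrr : (γ * T * R ^ p) ^ (1/p) = γ ^ (1/p) * (T:ℝ) ^ (1/p) * R := by
    rw [Real.mul_rpow (by positivity) (Real.rpow_nonneg hR p),
      Real.mul_rpow hγ hTpos.le, one_div, Real.rpow_rpow_inv hR (ne_of_gt hp0)]
  rw [hrhs, ← hrr]
  have hnorm : ∀ ε : Fin T → Bool,
      ‖(T : ℝ)⁻¹ • ∑ t, (if ε t then (1:ℝ) else -1) • z t ε‖ = (T:ℝ)⁻¹ * ‖F T ε‖ := by
    intro ε
    rw [← hFT ε, norm_smul, Real.norm_eq_abs, abs_of_nonneg (by positivity)]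
  calc (∑ ε : Fin T → Bool, ‖(T : ℝ)⁻¹ • ∑ t, (if ε t then (1:ℝ) else -1) • z t ε‖) / 2 ^ T
      = (T:ℝ)⁻¹ * ((∑ ε : Fin T → Bool, ‖F T ε‖) / N) := by
        rw [Finset.sum_congr rfl fun ε _ => hnorm ε, ← Finset.mul_sum, hNdef]
        ring
    _ ≤ (T:ℝ)⁻¹ * (γ * ↑T * R ^ p) ^ (1/p) :=
        mul_le_mul_of_nonneg_left hJ (by positivity)
end

section
/- Let H = {0,1,...,k} and let Φ be a class of functions with fat-shattering dimension at scale 2 equal to d on (F×X)-valued trees, via a payoff map (φ, f, x) ↦ ℓ_φ(f,x) ∈ H. Then the ℓ_∞ covering number at scale 1/2 over trees of depth T satisfies N_∞(1/2, Φ, T) ≤ Σ_{i=0}^d C(T,i) k^i ≤ (ekT)^d, and for T ≥ d, Σ_{i=0}^d C(T,i) k^i ≤ (ekT/d)^d. -/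
open Finset Real

namespace Stmt16Proof

variable {Z : Type*}

def IsTree {n : ℕ} (x : Fin n → (Fin n → Bool) → Z) : Prop :=
  ∀ (t : Fin n) (ε ε' : Fin n → Bool), (∀ s : Fin n, s < t → ε s = ε' s) → x t ε = x t ε'

def Shatters (G : Set (Z → ℝ)) {n : ℕ} (x : Fin n → (Fin n → Bool) → Z) : Prop :=
  ∃ w : Fin n → (Fin n → Bool) → ℝ, ∀ ε, ∃ g ∈ G, ∀ t,
    (if ε t then (1:ℝ) else -1) * (g (x t ε) - w t ε) ≥ 1

def gb (k d T : ℕ) : ℕ := ∑ i ∈ Finset.range (d+1), T.choose i * k ^ i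

lemma shatters_mono {G G' : Set (Z → ℝ)} (h : G ⊆ G') {n : ℕ}
    {x : Fin n → (Fin n → Bool) → Z} (hs : Shatters G x) : Shatters G' x := by
  obtain ⟨w, hw⟩ := hs
  exact ⟨w, fun ε => by obtain ⟨g, hg, hgw⟩ := hw ε; exact ⟨g, h hg, hgw⟩⟩


lemma one_le_gb (k d T : ℕ) : 1 ≤ gb k d T := by
  have h := Finset.single_le_sum (f := fun i => T.choose i * k ^ i)
    (fun i _ => Nat.zero_le _) (Finset.mem_range.mpr (Nat.succ_pos d))
  simpa [gb] using h


lemma gb_mono_d (k T : ℕ) {d d' : ℕ} (h : d ≤ d') : gb k d T ≤ gb k d' T :=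
  Finset.sum_le_sum_of_subset (Finset.range_subset_range.mpr (by omega))


lemma gb_rec (k d T : ℕ) : gb k (d+1) (T+1) = gb k (d+1) T + k * gb k d T := by
  unfold gb
  rw [Finset.sum_range_succ' (fun i => (T+1).choose i * k ^ i),
    Finset.sum_range_succ' (fun i => T.choose i * k ^ i)]
  simp only [Nat.choose_succ_succ, add_mul, Finset.sum_add_distrib, Nat.choose_zero_right,
    pow_zero, mul_one, Finset.mul_sum]
  have h1 : ∀ i ∈ Finset.range (d+1), k * (T.choose i * k ^ i) = T.choose i * k ^ (i+1) :=
    fun i _ => by ring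
  rw [Finset.sum_congr rfl h1]
  ring


lemma cover_d0 {k T : ℕ} (G : Set (Z → ℝ))
    (hval : ∀ g ∈ G, ∀ z, ∃ m : ℕ, m ≤ k ∧ g z = m)
    (hfat : ∀ y : Fin 1 → (Fin 1 → Bool) → Z, IsTree y → ¬ Shatters G y)
    (x : Fin T → (Fin T → Bool) → Z) :
    ∃ V : Finset (Fin T → (Fin T → Bool) → ℝ),
      (∀ g ∈ G, ∀ ε, ∃ v ∈ V, ∀ t, |v t ε - g (x t ε)| ≤ 1/2) ∧ V.card ≤ 1 := by
  have close : ∀ z : Z, ∀ g ∈ G, ∀ g' ∈ G, g' z ≤ g z + 1 := by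
    intro z g hg g' hg'
    by_contra hlt
    push_neg at hlt
    obtain ⟨m, hmk, hm⟩ := hval g hg z
    obtain ⟨m', hmk', hm'⟩ := hval g' hg' z
    have hmm : m + 2 ≤ m' := by
      rw [hm, hm'] at hlt
      have h2 : m + 1 < m' := by exact_mod_cast hlt
      omega
    apply hfat (fun _ _ => z) (fun t ε ε' _ => rfl)
    refine ⟨fun _ _ => (m:ℝ) + 1, fun ε => ?_⟩
    cases hb : ε 0 with
    | true =>
      refine ⟨g', hg', fun t => ?_⟩
      have ht : t = 0 := Subsingleton.elim t 0
      rw [ht, hb, hm']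
      have : (m:ℝ) + 2 ≤ (m':ℝ) := by exact_mod_cast hmm
      simp; linarith
    | false =>
      refine ⟨g, hg, fun t => ?_⟩
      have ht : t = 0 := Subsingleton.elim t 0
      rw [ht, hb, hm]
      norm_num
  rcases Set.eq_empty_or_nonempty G with hG | ⟨g₀, hg₀⟩
  · exact ⟨∅, by simp [hG], by simp⟩
  · set v : Fin T → (Fin T → Bool) → ℝ :=
      fun t ε => sInf ((fun g : Z → ℝ => g (x t ε)) '' G) + 1/2 with hv
    refine ⟨{v}, ?_, by simp⟩
    intro g hg ε
    refine ⟨v, Finset.mem_singleton_self v, fun t => ?_⟩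
    set A := (fun g' : Z → ℝ => g' (x t ε)) '' G with hA
    have hmem : g (x t ε) ∈ A := ⟨g, hg, rfl⟩
    have hbdd : BddBelow A := by
      refine ⟨g (x t ε) - 1, fun r hr => ?_⟩
      obtain ⟨g', hg', rfl⟩ := hr
      have := close (x t ε) g' hg' g hg
      linarith
    have h1 : sInf A ≤ g (x t ε) := csInf_le hbdd hmem
    have h2 : g (x t ε) - 1 ≤ sInf A := by
      apply le_csInf ⟨_, hmem⟩
      rintro r ⟨g', hg', rfl⟩
      have := close (x t ε) g' hg' g hg
      linarith
    rw [abs_le]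
    constructor <;> simp [hv] <;> linarith


lemma shatter_glue {n : ℕ} (G : Set (Z → ℝ)) (z₁ : Z) (j j' : ℕ) (hjj' : j + 2 ≤ j')
    {y y' : Fin n → (Fin n → Bool) → Z}
    (hy : IsTree y) (hy' : IsTree y')
    (hs : Shatters {g | g ∈ G ∧ g z₁ = (j:ℝ)} y)
    (hs' : Shatters {g | g ∈ G ∧ g z₁ = (j':ℝ)} y') :
    ∃ u : Fin (n+1) → (Fin (n+1) → Bool) → Z, IsTree u ∧ Shatters G u := by
  obtain ⟨w, hw⟩ := hs
  obtain ⟨w', hw'⟩ := hs'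
  refine ⟨Fin.cons (fun _ => z₁)
      (fun t ε => if ε 0 then y' t (Fin.tail ε) else y t (Fin.tail ε)), ?_, ?_⟩
  · intro t
    refine Fin.cases ?_ ?_ t
    · intro ε ε' _; simp
    · intro s ε ε' h
      have h0 : ε 0 = ε' 0 := h 0 (Fin.succ_pos s)
      have htail : ∀ r : Fin n, r < s → Fin.tail ε r = Fin.tail ε' r := by
        intro r hr
        exact h r.succ (by simpa using Fin.succ_lt_succ_iff.mpr hr)
      simp only [Fin.cons_succ, h0]
      cases hb : ε' 0 <;> simp only [Bool.false_eq_true, if_true, if_false]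
      · exact hy s _ _ htail
      · exact hy' s _ _ htail
  · refine ⟨Fin.cons (fun _ => (j:ℝ) + 1)
      (fun t ε => if ε 0 then w' t (Fin.tail ε) else w t (Fin.tail ε)), ?_⟩
    intro ε
    cases hb : ε 0 with
    | true =>
      obtain ⟨g, ⟨hgG, hgz⟩, hgw⟩ := hw' (Fin.tail ε)
      refine ⟨g, hgG, fun t => ?_⟩
      refine Fin.cases ?_ ?_ t
      · simp only [Fin.cons_zero, hb, if_true, hgz]
        have h2 : (j:ℝ) + 2 ≤ (j':ℝ) := by exact_mod_cast hjj'
        show (1:ℝ) * ((j':ℝ) - ((j:ℝ)+1)) ≥ 1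
        linarith
      · intro s
        have hts := hgw s
        simp only [Fin.cons_succ, hb, if_true]
        exact hts
    | false =>
      obtain ⟨g, ⟨hgG, hgz⟩, hgw⟩ := hw (Fin.tail ε)
      refine ⟨g, hgG, fun t => ?_⟩
      refine Fin.cases ?_ ?_ t
      · simp only [Fin.cons_zero, hb, if_false, hgz]
        norm_num
      · intro s
        have hts := hgw s
        simp only [Fin.cons_succ, hb, if_false]
        exact hts


lemma lift_cover {T : ℕ} (x : Fin (T+1) → (Fin (T+1) → Bool) → Z)
    (C : Set (Z → ℝ)) (r : ℝ) (z₁ : Z) (hz₁ : ∀ ε, x 0 ε = z₁)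
    (hr : ∀ g ∈ C, |r - g z₁| ≤ 1/2) (N : ℕ)
    (hcov : ∀ b : Bool, ∃ Vb : Finset (Fin T → (Fin T → Bool) → ℝ),
      (∀ g ∈ C, ∀ ε : Fin T → Bool, ∃ v ∈ Vb, ∀ t : Fin T,
        |v t ε - g (x t.succ (Fin.cons b ε))| ≤ 1/2) ∧ Vb.card ≤ N) :
    ∃ W : Finset (Fin (T+1) → (Fin (T+1) → Bool) → ℝ),
      (∀ g ∈ C, ∀ ε : Fin (T+1) → Bool, ∃ v ∈ W, ∀ t : Fin (T+1),
        |v t ε - g (x t ε)| ≤ 1/2) ∧ W.card ≤ N := by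
  obtain ⟨Vf, hVfcov, hVfcard⟩ := hcov false
  obtain ⟨Vt, hVtcov, hVtcard⟩ := hcov true
  set dflt : Fin T → (Fin T → Bool) → ℝ := fun _ _ => 0 with hdflt
  set mk : ℕ → (Fin (T+1) → (Fin (T+1) → Bool) → ℝ) := fun i =>
    Fin.cons (fun _ => r) (fun t ε =>
      if ε 0 then (Vt.toList.getD i dflt) t (Fin.tail ε)
      else (Vf.toList.getD i dflt) t (Fin.tail ε)) with hmk
  refine ⟨(Finset.range N).image mk, ?_, le_trans Finset.card_image_le (by simp)⟩
  intro g hg ε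
  have key : ∀ (b : Bool), ε 0 = b →
      ∀ V : Finset (Fin T → (Fin T → Bool) → ℝ), V.card ≤ N →
      (∀ t : Fin T, ∀ v' ∈ V, True) → -- dummy
      True := fun _ _ _ _ _ => trivial
  cases hb : ε 0 with
  | false =>
    obtain ⟨v', hv'mem, hv'⟩ := hVfcov g hg (Fin.tail ε)
    obtain ⟨i, hilen, higet⟩ := List.mem_iff_getElem.mp (Finset.mem_toList.mpr hv'mem)
    have hgetD : Vf.toList[i]?.getD dflt = v' := by
      simp [List.getElem?_eq_getElem hilen, higet]
    have hiN : i < N := lt_of_lt_of_le (by simpa using hilen) hVfcard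
    refine ⟨mk i, Finset.mem_image_of_mem mk (Finset.mem_range.mpr hiN), fun t => ?_⟩
    refine Fin.cases ?_ ?_ t
    · rw [hz₁ ε]
      simpa [hmk] using hr g hg
    · intro s
      have hcons : Fin.cons false (Fin.tail ε) = ε := by rw [← hb]; exact Fin.cons_self_tail ε
      have := hv' s
      rw [hcons] at this
      simpa [hmk, hb, hgetD] using this
  | true =>
    obtain ⟨v', hv'mem, hv'⟩ := hVtcov g hg (Fin.tail ε)
    obtain ⟨i, hilen, higet⟩ := List.mem_iff_getElem.mp (Finset.mem_toList.mpr hv'mem)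
    have hgetD : Vt.toList[i]?.getD dflt = v' := by
      simp [List.getElem?_eq_getElem hilen, higet]
    have hiN : i < N := lt_of_lt_of_le (by simpa using hilen) hVtcard
    refine ⟨mk i, Finset.mem_image_of_mem mk (Finset.mem_range.mpr hiN), fun t => ?_⟩
    refine Fin.cases ?_ ?_ t
    · rw [hz₁ ε]
      simpa [hmk] using hr g hg
    · intro s
      have hcons : Fin.cons true (Fin.tail ε) = ε := by rw [← hb]; exact Fin.cons_self_tail ε
      have := hv' s
      rw [hcons] at this
      simpa [hmk, hb, hgetD] using this


lemma cover_main (k : ℕ) :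
    ∀ (T : ℕ) (d : ℕ) (G : Set (Z → ℝ)),
      (∀ g ∈ G, ∀ z, ∃ m : ℕ, m ≤ k ∧ g z = m) →
      (∀ (n : ℕ), d < n → ∀ y : Fin n → (Fin n → Bool) → Z, IsTree y → ¬ Shatters G y) →
      ∀ x : Fin T → (Fin T → Bool) → Z, IsTree x →
      ∃ V : Finset (Fin T → (Fin T → Bool) → ℝ),
        (∀ g ∈ G, ∀ ε, ∃ v ∈ V, ∀ t, |v t ε - g (x t ε)| ≤ 1/2) ∧
        V.card ≤ gb k d T := by
  intro T
  induction T with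
  | zero =>
    intro d G hval hfat x hx
    exact ⟨{fun _ _ => 0}, fun g hg ε => ⟨_, Finset.mem_singleton_self _, fun t => t.elim0⟩,
      by simpa using one_le_gb k d 0⟩
  | succ T IH =>
    intro d G hval hfat x hx
    match d with
    | 0 =>
      obtain ⟨V, hVcov, hVcard⟩ := cover_d0 G hval (fun y hy => hfat 1 Nat.one_pos y hy) x
      exact ⟨V, hVcov, hVcard.trans (one_le_gb k 0 (T+1))⟩
    | d + 1 =>
      classical
      set z₁ : Z := x 0 (fun _ => false) with hz₁def
      have hz₁ : ∀ ε, x 0 ε = z₁ := by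
        intro ε
        exact hx 0 ε (fun _ => false) (fun s hs => absurd hs (by simp [Fin.lt_def]))
      set Gv : ℕ → Set (Z → ℝ) := fun j => {g | g ∈ G ∧ g z₁ = (j:ℝ)} with hGv
      set Q : ℕ → Prop := fun j =>
        ∃ y : Fin (d+1) → (Fin (d+1) → Bool) → Z, IsTree y ∧ Shatters (Gv j) y with hQ
      have hQ2 : ∀ j j', j + 2 ≤ j' → Q j → Q j' → False := by
        intro j j' hjj' ⟨y, hy, hsy⟩ ⟨y', hy', hsy'⟩
        obtain ⟨u, hu, hsu⟩ := shatter_glue G z₁ j j' hjj' hy hy' hsy hsy'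
        exact hfat (d+2) (by omega) u hu hsu
      set j₀ : ℕ := if hS : ∃ j, Q j then Nat.find hS else 0 with hj₀def
      have hj₀k : j₀ ≤ k := by
        rw [hj₀def]
        split
        case isTrue hS =>
          have hQj₀ : Q (Nat.find hS) := Nat.find_spec hS
          obtain ⟨y, hy, w, hw⟩ := hQj₀
          obtain ⟨g, hg, -⟩ := hw (fun _ => false)
          obtain ⟨m, hmk, hm⟩ := hval g hg.1 z₁
          have : ((Nat.find hS : ℕ) : ℝ) = (m : ℝ) := by rw [← hg.2, hm]
          have := Nat.cast_injective (R := ℝ) this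
          omega
        case isFalse => omega
      have hQj : ∀ j, Q j → (j = j₀ ∨ j = j₀ + 1) := by
        intro j hQjj
        rw [hj₀def]
        split
        case isTrue hS =>
          have h1 : Nat.find hS ≤ j := Nat.find_min' hS hQjj
          have h2 : ¬ (Nat.find hS + 2 ≤ j) := fun hc => hQ2 _ _ hc (Nat.find_spec hS) hQjj
          omega
        case isFalse hS => exact absurd ⟨j, hQjj⟩ hS
      set B : Finset ℕ := (Finset.range (k+1)).filter (fun j => j ≠ j₀ ∧ j ≠ j₀+1) with hBdef
      have hBcard : B.card ≤ k := by
        have hsub : B ⊆ (Finset.range (k+1)).erase j₀ := by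
          intro j hj
          rw [hBdef, Finset.mem_filter] at hj
          exact Finset.mem_erase.mpr ⟨hj.2.1, hj.1⟩
        calc B.card ≤ ((Finset.range (k+1)).erase j₀).card := Finset.card_le_card hsub
          _ = k := by
            rw [Finset.card_erase_of_mem (Finset.mem_range.mpr (by omega))]
            simp
      -- merged class
      set Gm : Set (Z → ℝ) := {g | g ∈ G ∧ (g z₁ = (j₀:ℝ) ∨ g z₁ = (j₀:ℝ) + 1)} with hGm
      have hGmsub : Gm ⊆ G := fun g hg => hg.1
      have hWm : ∃ W : Finset (Fin (T+1) → (Fin (T+1) → Bool) → ℝ),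
          (∀ g ∈ Gm, ∀ ε : Fin (T+1) → Bool, ∃ v ∈ W, ∀ t : Fin (T+1),
            |v t ε - g (x t ε)| ≤ 1/2) ∧ W.card ≤ gb k (d+1) T := by
        refine lift_cover x Gm ((j₀:ℝ) + 1/2) z₁ hz₁ ?_ (gb k (d+1) T) ?_
        · rintro g ⟨-, hgz | hgz⟩ <;> rw [hgz] <;> rw [abs_le] <;> constructor <;> norm_num
        · intro b
          refine IH (d+1) Gm (fun g hg => hval g (hGmsub hg)) ?_
            (fun t ε => x t.succ (Fin.cons b ε)) ?_
          · intro n hn y hy hs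
            exact hfat n hn y hy (shatters_mono hGmsub hs)
          · intro t ε ε' hεε'
            refine hx t.succ _ _ ?_
            intro s
            refine Fin.cases ?_ ?_ s
            · intro _; simp
            · intro r hrs
              simp only [Fin.cons_succ]
              exact hεε' r (Fin.succ_lt_succ_iff.mp (by simpa using hrs))
      obtain ⟨Wm, hWmcov, hWmcard⟩ := hWm
      -- other classes
      have hWo : ∀ j, j ∈ B → ∃ W : Finset (Fin (T+1) → (Fin (T+1) → Bool) → ℝ),
          (∀ g ∈ Gv j, ∀ ε : Fin (T+1) → Bool, ∃ v ∈ W, ∀ t : Fin (T+1),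
            |v t ε - g (x t ε)| ≤ 1/2) ∧ W.card ≤ gb k d T := by
        intro j hj
        rw [hBdef, Finset.mem_filter] at hj
        have hGvsub : Gv j ⊆ G := fun g hg => hg.1
        refine lift_cover x (Gv j) ((j:ℝ)) z₁ hz₁ ?_ (gb k d T) ?_
        · rintro g ⟨-, hgz⟩
          rw [hgz]
          norm_num
        · intro b
          refine IH d (Gv j) (fun g hg => hval g (hGvsub hg)) ?_
            (fun t ε => x t.succ (Fin.cons b ε)) ?_
          · intro n hn y hy hs
            rcases Nat.lt_or_ge n (d+2) with hn2 | hn2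
            · have : n = d + 1 := by omega
              subst this
              have hQjj : Q j := ⟨y, hy, hs⟩
              rcases hQj j hQjj with h | h
              · exact hj.2.1 h
              · exact hj.2.2 h
            · exact hfat n (by omega) y hy (shatters_mono hGvsub hs)
          · intro t ε ε' hεε'
            refine hx t.succ _ _ ?_
            intro s
            refine Fin.cases ?_ ?_ s
            · intro _; simp
            · intro r hrs
              simp only [Fin.cons_succ]
              exact hεε' r (Fin.succ_lt_succ_iff.mp (by simpa using hrs))
      set Wo : ℕ → Finset (Fin (T+1) → (Fin (T+1) → Bool) → ℝ) :=
        fun j => if hj : j ∈ B then (hWo j hj).choose else ∅ with hWodef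
      have hWocov : ∀ j (hj : j ∈ B), (∀ g ∈ Gv j, ∀ ε : Fin (T+1) → Bool,
          ∃ v ∈ Wo j, ∀ t : Fin (T+1), |v t ε - g (x t ε)| ≤ 1/2) := by
        intro j hj
        rw [hWodef]
        simp only [dif_pos hj]
        exact (hWo j hj).choose_spec.1
      have hWocard : ∀ j, j ∈ B → (Wo j).card ≤ gb k d T := by
        intro j hj
        rw [hWodef]
        simp only [dif_pos hj]
        exact (hWo j hj).choose_spec.2
      refine ⟨Wm ∪ B.biUnion Wo, ?_, ?_⟩
      · intro g hg ε
        obtain ⟨m, hmk, hm⟩ := hval g hg z₁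
        by_cases hm0 : m = j₀ ∨ m = j₀ + 1
        · have hgm : g ∈ Gm := by
            refine ⟨hg, ?_⟩
            rcases hm0 with h | h
            · left; rw [hm, h]
            · right; rw [hm, h]; push_cast; ring
          obtain ⟨v, hv, hvcov⟩ := hWmcov g hgm ε
          exact ⟨v, Finset.mem_union_left _ hv, hvcov⟩
        · push_neg at hm0
          have hmB : m ∈ B := by
            rw [hBdef, Finset.mem_filter]
            exact ⟨Finset.mem_range.mpr (by omega), hm0⟩
          have hgv : g ∈ Gv m := ⟨hg, hm⟩
          obtain ⟨v, hv, hvcov⟩ := hWocov m hmB g hgv ε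
          exact ⟨v, Finset.mem_union_right _ (Finset.mem_biUnion.mpr ⟨m, hmB, hv⟩), hvcov⟩
      · calc (Wm ∪ B.biUnion Wo).card ≤ Wm.card + (B.biUnion Wo).card :=
              Finset.card_union_le _ _
          _ ≤ gb k (d+1) T + ∑ j ∈ B, (Wo j).card :=
              Nat.add_le_add hWmcard (Finset.card_biUnion_le)
          _ ≤ gb k (d+1) T + B.card * gb k d T := by
              refine Nat.add_le_add_left ?_ _
              calc ∑ j ∈ B, (Wo j).card ≤ ∑ j ∈ B, gb k d T :=
                    Finset.sum_le_sum hWocard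
                _ = B.card * gb k d T := by rw [Finset.sum_const, smul_eq_mul]
          _ ≤ gb k (d+1) T + k * gb k d T :=
              Nat.add_le_add_left (Nat.mul_le_mul_right _ hBcard) _
          _ = gb k (d+1) (T+1) := (gb_rec k d T).symm


lemma sauer_sum (d T : ℕ) (hd : 1 ≤ d) (hdT : d ≤ T) :
    (∑ i ∈ Finset.range (d + 1), (T.choose i : ℝ))
      ≤ Real.exp d * ((T:ℝ)/d)^d := by
  have hT0 : (0:ℝ) < T := by exact_mod_cast Nat.lt_of_lt_of_le (by omega) hdT
  have hd0 : (0:ℝ) < d := by exact_mod_cast hd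
  set x : ℝ := (d:ℝ)/(T:ℝ) with hx
  have hx0 : 0 < x := by positivity
  have hx1 : x ≤ 1 := by
    rw [hx, div_le_one hT0]; exact_mod_cast hdT
  have key : (∑ i ∈ Finset.range (d + 1), (T.choose i : ℝ)) * x ^ d
      ≤ ∑ i ∈ Finset.range (T + 1), (T.choose i : ℝ) * x ^ i := by
    rw [Finset.sum_mul]
    have step1 : ∑ i ∈ Finset.range (d+1), (T.choose i : ℝ) * x ^ d
        ≤ ∑ i ∈ Finset.range (d+1), (T.choose i : ℝ) * x ^ i := by
      refine Finset.sum_le_sum fun i hi => ?_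
      rw [mem_range] at hi
      exact mul_le_mul_of_nonneg_left (pow_le_pow_of_le_one hx0.le hx1 (by omega)) (by positivity)
    refine step1.trans (Finset.sum_le_sum_of_subset_of_nonneg ?_ ?_)
    · exact Finset.range_subset_range.mpr (by omega)
    · intro i _ _; positivity
  have binom : ∑ i ∈ Finset.range (T + 1), (T.choose i : ℝ) * x ^ i = (1 + x) ^ T := by
    rw [add_comm (1:ℝ) x, add_pow]
    refine Finset.sum_congr rfl fun i hi => by ring
  have hexp : (1 + x) ^ T ≤ Real.exp d := by
    have h1 : (1 + x) ≤ Real.exp x := by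
      have := Real.add_one_le_exp x; linarith
    calc (1+x)^T ≤ Real.exp x ^ T := by
          exact pow_le_pow_left₀ (by positivity) h1 T
      _ = Real.exp (T * x) := (Real.exp_nat_mul x T).symm
      _ = Real.exp d := by rw [hx]; congr 1; field_simp
  have : (∑ i ∈ Finset.range (d + 1), (T.choose i : ℝ)) * x ^ d ≤ Real.exp d :=
    key.trans (binom ▸ hexp)
  calc (∑ i ∈ Finset.range (d + 1), (T.choose i : ℝ))
      = (∑ i ∈ Finset.range (d + 1), (T.choose i : ℝ)) * x ^ d * (1/x)^d := by
        rw [mul_assoc, ← mul_pow, mul_one_div_cancel hx0.ne', one_pow, mul_one]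
    _ ≤ Real.exp d * (1/x)^d := by
        exact mul_le_mul_of_nonneg_right this (by positivity)
    _ = Real.exp d * ((T:ℝ)/d)^d := by rw [hx]; congr 2; field_simp


lemma part2 (k d T : ℕ) (hk : 1 ≤ k) (hT : 1 ≤ T) :
    (∑ i ∈ Finset.range (d + 1), (T.choose i : ℝ) * (k : ℝ) ^ i)
      ≤ (Real.exp 1 * k * T) ^ d := by
  rcases Nat.eq_zero_or_pos d with rfl | hd
  · simp
  have hkT : (1:ℝ) ≤ (k:ℝ) * T := by
    have : (1:ℕ) ≤ k * T := Nat.one_le_iff_ne_zero.mpr (by positivity)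
    exact_mod_cast this
  have h1 : (∑ i ∈ Finset.range (d + 1), (T.choose i : ℝ) * (k : ℝ) ^ i)
      ≤ ∑ i ∈ Finset.range (d + 1), ((k:ℝ) * T) ^ i / i.factorial := by
    refine Finset.sum_le_sum fun i _ => ?_
    have := Nat.choose_le_pow_div (α := ℝ) i T
    calc (T.choose i : ℝ) * (k : ℝ) ^ i ≤ ((T:ℝ) ^ i / i.factorial) * (k:ℝ)^i := by
          apply mul_le_mul_of_nonneg_right this (by positivity)
      _ = ((k:ℝ) * T) ^ i / i.factorial := by ring
  have h2 : ∑ i ∈ Finset.range (d + 1), ((k:ℝ) * T) ^ i / i.factorial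
      ≤ ((k:ℝ)*T)^d * ∑ i ∈ Finset.range (d + 1), (1:ℝ) ^ i / i.factorial := by
    rw [Finset.mul_sum]
    refine Finset.sum_le_sum fun i hi => ?_
    rw [mem_range] at hi
    have : ((k:ℝ)*T)^i ≤ ((k:ℝ)*T)^d := pow_le_pow_right₀ hkT (by omega)
    simp only [one_pow]
    rw [div_le_iff₀ (by positivity : (0:ℝ) < i.factorial), mul_assoc, one_div,
      inv_mul_cancel₀ (by positivity : (i.factorial:ℝ) ≠ 0), mul_one]
    exact this
  have h3 : ∑ i ∈ Finset.range (d + 1), (1:ℝ) ^ i / i.factorial ≤ Real.exp 1 :=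
    Real.sum_le_exp_of_nonneg zero_le_one _
  have h4 : Real.exp 1 ≤ Real.exp 1 ^ d :=
    le_self_pow₀ (by have := Real.one_le_exp zero_le_one; linarith) (by omega)
  calc (∑ i ∈ Finset.range (d + 1), (T.choose i : ℝ) * (k : ℝ) ^ i)
      ≤ ((k:ℝ)*T)^d * Real.exp 1 := by
        refine h1.trans (h2.trans ?_)
        exact mul_le_mul_of_nonneg_left h3 (by positivity)
    _ ≤ ((k:ℝ)*T)^d * Real.exp 1 ^ d := mul_le_mul_of_nonneg_left h4 (by positivity)
    _ = (Real.exp 1 * k * T) ^ d := by rw [← mul_pow]; ring_nf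


lemma part3 (k d T : ℕ) (hk : 1 ≤ k) (hT : 1 ≤ T) (hdT : d ≤ T) :
    (∑ i ∈ Finset.range (d + 1), (T.choose i : ℝ) * (k : ℝ) ^ i)
      ≤ (Real.exp 1 * k * T / d) ^ d := by
  rcases Nat.eq_zero_or_pos d with rfl | hd
  · simp
  have hk1 : (1:ℝ) ≤ (k:ℝ) := by exact_mod_cast hk
  have h1 : (∑ i ∈ Finset.range (d + 1), (T.choose i : ℝ) * (k : ℝ) ^ i)
      ≤ (k:ℝ)^d * ∑ i ∈ Finset.range (d + 1), (T.choose i : ℝ) := by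
    rw [Finset.mul_sum]
    refine Finset.sum_le_sum fun i hi => ?_
    rw [mem_range] at hi
    rw [mul_comm ((k:ℝ)^d) _]
    exact mul_le_mul_of_nonneg_left (pow_le_pow_right₀ hk1 (by omega)) (by positivity)
  have h2 := sauer_sum d T hd hdT
  have hd0 : (0:ℝ) < d := by positivity
  calc (∑ i ∈ Finset.range (d + 1), (T.choose i : ℝ) * (k : ℝ) ^ i)
      ≤ (k:ℝ)^d * (Real.exp d * ((T:ℝ)/d)^d) :=
        h1.trans (mul_le_mul_of_nonneg_left h2 (by positivity))
    _ = (Real.exp 1 * k * T / d) ^ d := by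
        rw [show Real.exp (d:ℝ) = Real.exp 1 ^ d by
          rw [← Real.exp_nat_mul]; norm_num]
        rw [div_pow]
        field_simp
        rw [div_pow, mul_comm ((d:ℝ)^d), div_mul_cancel₀ _ (pow_ne_zero d hd0.ne')]
        ring

end Stmt16Proof

/-- Sauer–Shelah-type bound for trees (Theorem 8): if the payoff class `L` takes
values in `{0,…,k}` and its fat-shattering dimension at scale `2` equals `d`
(no `(F×X)`-valued tree of depth `> d` is `2`-shattered, and some tree of depth
`d` is `2`-shattered), then every `(F×X)`-valued tree of depth `T` admits an
`ℓ_∞`-cover at scale `1/2` of size at most `∑_{i=0}^d C(T,i) k^i ≤ (ekT)^d`,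
and for `T ≥ d` moreover `∑_{i=0}^d C(T,i) k^i ≤ (ekT/d)^d`. -/
theorem stmt_16 {Φι F X : Type*} (k d T : ℕ) (hk : 1 ≤ k) (hT : 1 ≤ T)
    (L : Φι → F → X → ℝ)
    (hrange : ∀ φ f x, ∃ m : ℕ, m ≤ k ∧ L φ f x = m)
    (hfat_le : ∀ d' : ℕ, d < d' →
      ∀ (f : Fin d' → (Fin d' → Bool) → F) (x : Fin d' → (Fin d' → Bool) → X),
        (∀ (t : Fin d') (ε ε' : Fin d' → Bool),
          (∀ s : Fin d', s < t → ε s = ε' s) → f t ε = f t ε') →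
        (∀ (t : Fin d') (ε ε' : Fin d' → Bool),
          (∀ s : Fin d', s < t → ε s = ε' s) → x t ε = x t ε') →
        ¬ ∃ w : Fin d' → (Fin d' → Bool) → ℝ, ∀ ε : Fin d' → Bool, ∃ φ : Φι,
            ∀ t : Fin d',
              (if ε t then (1:ℝ) else -1) * (L φ (f t ε) (x t ε) - w t ε) ≥ 1)
    (hfat_ge : ∃ (f : Fin d → (Fin d → Bool) → F) (x : Fin d → (Fin d → Bool) → X),
        (∀ (t : Fin d) (ε ε' : Fin d → Bool),
          (∀ s : Fin d, s < t → ε s = ε' s) → f t ε = f t ε') ∧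
        (∀ (t : Fin d) (ε ε' : Fin d → Bool),
          (∀ s : Fin d, s < t → ε s = ε' s) → x t ε = x t ε') ∧
        ∃ w : Fin d → (Fin d → Bool) → ℝ, ∀ ε : Fin d → Bool, ∃ φ : Φι,
            ∀ t : Fin d,
              (if ε t then (1:ℝ) else -1) * (L φ (f t ε) (x t ε) - w t ε) ≥ 1) :
    (∀ (f : Fin T → (Fin T → Bool) → F) (x : Fin T → (Fin T → Bool) → X),
        (∀ (t : Fin T) (ε ε' : Fin T → Bool),
          (∀ s : Fin T, s < t → ε s = ε' s) → f t ε = f t ε') →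
        (∀ (t : Fin T) (ε ε' : Fin T → Bool),
          (∀ s : Fin T, s < t → ε s = ε' s) → x t ε = x t ε') →
        ∃ V : Finset (Fin T → (Fin T → Bool) → ℝ),
          (∀ (φ : Φι) (ε : Fin T → Bool), ∃ v ∈ V,
            ∀ t : Fin T, |v t ε - L φ (f t ε) (x t ε)| ≤ 1 / 2) ∧
          V.card ≤ ∑ i ∈ Finset.range (d + 1), T.choose i * k ^ i)
    ∧ ((∑ i ∈ Finset.range (d + 1), (T.choose i : ℝ) * (k : ℝ) ^ i)
        ≤ (Real.exp 1 * k * T) ^ d)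
    ∧ (d ≤ T → (∑ i ∈ Finset.range (d + 1), (T.choose i : ℝ) * (k : ℝ) ^ i)
        ≤ (Real.exp 1 * k * T / d) ^ d) := by
  refine ⟨?_, Stmt16Proof.part2 k d T hk hT, fun hdT => Stmt16Proof.part3 k d T hk hT hdT⟩
  intro f x hf hx
  classical
  set G : Set ((F × X) → ℝ) := Set.range (fun φ (p : F × X) => L φ p.1 p.2) with hG
  have hval : ∀ g ∈ G, ∀ z, ∃ m : ℕ, m ≤ k ∧ g z = m := by
    rintro g ⟨φ, rfl⟩ z; exact hrange φ z.1 z.2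
  have hfat : ∀ n, d < n → ∀ y : Fin n → (Fin n → Bool) → F × X,
      Stmt16Proof.IsTree y → ¬ Stmt16Proof.Shatters G y := by
    intro n hn y hy hsh
    obtain ⟨w, hw⟩ := hsh
    refine hfat_le n hn (fun t ε => (y t ε).1) (fun t ε => (y t ε).2) ?_ ?_ ⟨w, ?_⟩
    · intro t ε ε' h; exact congrArg Prod.fst (hy t ε ε' h)
    · intro t ε ε' h; exact congrArg Prod.snd (hy t ε ε' h)
    · intro ε
      obtain ⟨g, ⟨φ, rfl⟩, hgw⟩ := hw ε
      exact ⟨φ, fun t => hgw t⟩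
  have hxtree : Stmt16Proof.IsTree (fun t ε => (f t ε, x t ε)) := by
    intro t ε ε' h; simp only [hf t ε ε' h, hx t ε ε' h]
  obtain ⟨V, hVcov, hVcard⟩ := Stmt16Proof.cover_main k T d G hval hfat _ hxtree
  refine ⟨V, ?_, by simpa [Stmt16Proof.gb] using hVcard⟩
  intro φ ε
  exact hVcov _ ⟨φ, rfl⟩ ε
end

section
/- Suppose a nonnegative function G on a Banach space is sub-additive (G(a+b) ≤ G(a) + G(b)), 1-Lipschitz with respect to the norm ‖·‖, and G(0) = 0. Let V be a finite α-cover in ℓ_1 of a family of sequences {(u^φ_t(ε))_{t≤T} : φ}, meaning for every φ and every sign path ε there exists v ∈ V with (1/T)Σ_{t=1}^T ‖v_t(ε) − u^φ_t(ε)‖ ≤ α. Then P_ε( sup_φ G((1/T)Σ_t ε_t u^φ_t(ε)) > 2α + θ ) ≤ |V| · sup_z P_ε( G((1/T)Σ_t ε_t z_t(ε)) > θ ), where the supremum on the right is over all trees z with values in the payoff space. -/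
/-- Union bound via an `ℓ₁` cover (Lemma 18): if `G ≥ 0` is sub-additive,
`1`-Lipschitz with `G(0)=0`, and `V` is an `α`-cover in `ℓ₁` of the family of
trees `u^φ`, then
`P_ε(sup_φ G((1/T)∑ₜ εₜ u^φₜ(ε)) > 2α + θ) ≤ |V| · sup_z P_ε(G((1/T)∑ₜ εₜ zₜ(ε)) > θ)`,
the supremum on the right over all `H`-valued trees `z` of depth `T`. -/
theorem stmt_18 {H : Type*} [NormedAddCommGroup H] [NormedSpace ℝ H]
    {Φι : Type*} [Nonempty Φι] (T : ℕ) (α θ : ℝ)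
    (G : H → ℝ) (hGnn : ∀ x, 0 ≤ G x) (hGsub : ∀ a b, G (a + b) ≤ G a + G b)
    (hGlip : ∀ a b, |G a - G b| ≤ ‖a - b‖) (hG0 : G 0 = 0)
    (u : Φι → Fin T → (Fin T → Bool) → H)
    (hutree : ∀ (φ : Φι) (t : Fin T) (ε ε' : Fin T → Bool),
      (∀ s : Fin T, s < t → ε s = ε' s) → u φ t ε = u φ t ε')
    (V : Finset (Fin T → (Fin T → Bool) → H))
    (hVtree : ∀ v ∈ V, ∀ (t : Fin T) (ε ε' : Fin T → Bool),
      (∀ s : Fin T, s < t → ε s = ε' s) → v t ε = v t ε')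
    (hcover : ∀ (φ : Φι) (ε : Fin T → Bool), ∃ v ∈ V,
      (T : ℝ)⁻¹ * ∑ t, ‖v t ε - u φ t ε‖ ≤ α) :
    ((({ε : Fin T → Bool | ∃ φ : Φι, 2 * α + θ
          < G ((T : ℝ)⁻¹ • ∑ t, (if ε t then (1:ℝ) else -1) • u φ t ε)} : Set _).ncard : ℝ)
        / 2 ^ T)
      ≤ V.card * ⨆ z : {z : Fin T → (Fin T → Bool) → H //
            ∀ (t : Fin T) (ε ε' : Fin T → Bool),
              (∀ s : Fin T, s < t → ε s = ε' s) → z t ε = z t ε'},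
          ((({ε : Fin T → Bool | θ
              < G ((T : ℝ)⁻¹ • ∑ t, (if ε t then (1:ℝ) else -1) • z.1 t ε)} : Set _).ncard : ℝ)
            / 2 ^ T) := by
  classical
  have hα : 0 ≤ α := by
    obtain ⟨v, _, h⟩ := hcover (Classical.arbitrary Φι) (fun _ => true)
    refine le_trans ?_ h
    positivity
  have hcnn : (0:ℝ) ≤ (T : ℝ)⁻¹ := by positivity
  set A : Set (Fin T → Bool) := {ε | ∃ φ : Φι, 2 * α + θ
      < G ((T : ℝ)⁻¹ • ∑ t, (if ε t then (1:ℝ) else -1) • u φ t ε)} with hA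
  set B : (Fin T → (Fin T → Bool) → H) → Set (Fin T → Bool) :=
    fun v => {ε | θ < G ((T : ℝ)⁻¹ • ∑ t, (if ε t then (1:ℝ) else -1) • v t ε)} with hB
  -- inclusion of events
  have hsub : A ⊆ ⋃ v ∈ V, B v := by
    rintro ε ⟨φ, hφ⟩
    obtain ⟨v, hvV, hvcov⟩ := hcover φ ε
    refine Set.mem_iUnion₂.2 ⟨v, hvV, ?_⟩
    have hxy : ‖((T : ℝ)⁻¹ • ∑ t, (if ε t then (1:ℝ) else -1) • u φ t ε) -
        ((T : ℝ)⁻¹ • ∑ t, (if ε t then (1:ℝ) else -1) • v t ε)‖ ≤ α := by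
      rw [← smul_sub, ← Finset.sum_sub_distrib]
      calc ‖(T : ℝ)⁻¹ • ∑ t, ((if ε t then (1:ℝ) else -1) • u φ t ε
              - (if ε t then (1:ℝ) else -1) • v t ε)‖
          = (T : ℝ)⁻¹ * ‖∑ t, (if ε t then (1:ℝ) else -1) • (u φ t ε - v t ε)‖ := by
            rw [norm_smul, Real.norm_eq_abs, abs_of_nonneg hcnn]
            congr 2
            exact Finset.sum_congr rfl fun t _ => (smul_sub _ _ _).symm
        _ ≤ (T : ℝ)⁻¹ * ∑ t, ‖(if ε t then (1:ℝ) else -1) • (u φ t ε - v t ε)‖ := by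
            gcongr
            exact norm_sum_le _ _
        _ = (T : ℝ)⁻¹ * ∑ t, ‖v t ε - u φ t ε‖ := by
            congr 1
            refine Finset.sum_congr rfl fun t _ => ?_
            by_cases h : ε t <;> simp [h, norm_smul, norm_sub_rev (u φ t ε)]
        _ ≤ α := hvcov
    have hGle : G ((T : ℝ)⁻¹ • ∑ t, (if ε t then (1:ℝ) else -1) • u φ t ε)
        - G ((T : ℝ)⁻¹ • ∑ t, (if ε t then (1:ℝ) else -1) • v t ε) ≤ α :=
      le_trans (le_trans (le_abs_self _) (hGlip _ _)) hxy
    show θ < _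
    linarith
  -- the supremum and its boundedness
  set f : {z : Fin T → (Fin T → Bool) → H //
      ∀ (t : Fin T) (ε ε' : Fin T → Bool),
        (∀ s : Fin T, s < t → ε s = ε' s) → z t ε = z t ε'} → ℝ :=
    fun z => (((B z.1).ncard : ℝ) / 2 ^ T) with hf
  have hbdd : BddAbove (Set.range f) := by
    refine ⟨1, ?_⟩
    rintro x ⟨z, rfl⟩
    have h1 : (B z.1).ncard ≤ 2 ^ T := by
      have h2 := Set.ncard_le_ncard (Set.subset_univ (B z.1)) Set.finite_univ
      simpa [Set.ncard_univ, Nat.card_eq_fintype_card] using h2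
    rw [hf, div_le_one (by positivity)]
    exact_mod_cast h1
  have hfs : ∀ v ∈ V, ((B v).ncard : ℝ) / 2 ^ T ≤ ⨆ z, f z := fun v hv =>
    le_ciSup hbdd (⟨v, hVtree v hv⟩ :
      {z : Fin T → (Fin T → Bool) → H //
        ∀ (t : Fin T) (ε ε' : Fin T → Bool),
          (∀ s : Fin T, s < t → ε s = ε' s) → z t ε = z t ε'})
  -- counting
  have hAcard : (A.ncard : ℝ) ≤ ∑ v ∈ V, ((B v).ncard : ℝ) := by
    have h1 : A.toFinset ⊆ V.biUnion fun v => (B v).toFinset := by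
      intro ε hε
      obtain ⟨v, hvV, hvB⟩ := Set.mem_iUnion₂.1 (hsub (Set.mem_toFinset.1 hε))
      exact Finset.mem_biUnion.2 ⟨v, hvV, Set.mem_toFinset.2 hvB⟩
    have h2 : A.toFinset.card ≤ ∑ v ∈ V, (B v).toFinset.card :=
      le_trans (Finset.card_le_card h1) Finset.card_biUnion_le
    have h3 : A.ncard = A.toFinset.card := Set.ncard_eq_toFinset_card' A
    have h4 : ∀ v, (B v).ncard = (B v).toFinset.card :=
      fun v => Set.ncard_eq_toFinset_card' (B v)
    rw [h3]
    push_cast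
    calc (A.toFinset.card : ℝ) ≤ (∑ v ∈ V, (B v).toFinset.card : ℕ) := by exact_mod_cast h2
      _ = ∑ v ∈ V, ((B v).ncard : ℝ) := by
          push_cast
          exact Finset.sum_congr rfl fun v _ => by rw [h4 v]
  calc (A.ncard : ℝ) / 2 ^ T ≤ (∑ v ∈ V, ((B v).ncard : ℝ)) / 2 ^ T := by
        gcongr
      _ = ∑ v ∈ V, ((B v).ncard : ℝ) / 2 ^ T := Finset.sum_div _ _ _
      _ ≤ ∑ _v ∈ V, ⨆ z, f z := Finset.sum_le_sum hfs
      _ = V.card * ⨆ z, f z := by rw [Finset.sum_const, nsmul_eq_mul]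
end
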